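/- arXiv:2204.01406 — 7 statements merged into one kernel-verified Lean document; each statement's English description precedes it below -/
import Mathlib

section
/- Let s > 0, t > 0, 0 ≤ r < s, and let μ be a finite positive Borel measure on [0,1) that is an s-Carleson measure (i.e., μ([x,1)) ≤ C(1-x)^s for all x). Then sup over a in the unit disk of ∫_{[0,1)} (1-|a|)^t / ((1-x)^r (1-|a|x)^{s+t-r}) dμ(x) is finite. -/
open MeasureTheory Set

noncomputable def dy (n : ℕ) : ℝ := ((2:ℝ)^n)⁻¹

lemma dy_pos (n : ℕ) : 0 < dy n := by unfold dy; positivity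

lemma dy_le_one (n : ℕ) : dy n ≤ 1 := by
  unfold dy
  rw [inv_le_one_iff₀]
  right
  exact one_le_pow₀ one_le_two

lemma dy_eq_rpow (n : ℕ) : dy n = (2:ℝ) ^ (-(n:ℝ)) := by
  rw [dy, ← Real.rpow_natCast 2 n, ← Real.rpow_neg (by norm_num)]

lemma dy_rpow (n : ℕ) (c : ℝ) : dy n ^ c = (2:ℝ) ^ (-(n:ℝ) * c) := by
  rw [dy_eq_rpow, ← Real.rpow_mul (by norm_num)]

lemma exists_dy (y : ℝ) (h0 : 0 < y) (h1 : y ≤ 1) : ∃ m : ℕ, y ≤ dy m ∧ dy (m+1) < y := by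
  have hex : ∃ n : ℕ, dy (n+1) < y := by
    obtain ⟨n, hn⟩ := exists_pow_lt_of_lt_one h0 (by norm_num : (1:ℝ)/2 < 1)
    refine ⟨n, lt_of_le_of_lt ?_ hn⟩
    rw [dy, div_pow, one_pow, ← inv_eq_one_div]
    exact inv_anti₀ (by positivity) (pow_le_pow_right₀ one_le_two (Nat.le_succ n))
  classical
  refine ⟨Nat.find hex, ?_, Nat.find_spec hex⟩
  rcases Nat.eq_zero_or_pos (Nat.find hex) with h | h
  · rw [h]; simpa [dy] using h1
  · have := Nat.find_min hex (m := Nat.find hex - 1) (by omega)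
    push_neg at this
    have : dy (Nat.find hex - 1 + 1) = dy (Nat.find hex) := by congr 1; omega
    linarith [Nat.find_min hex (m := Nat.find hex - 1) (by omega), this]

lemma key_pointwise (s t r ρ x : ℝ) (hr0 : 0 ≤ r) (hst : 0 < s + t - r)
    (hρ0 : 0 ≤ ρ) (hρ1 : ρ < 1) (hx0 : 0 ≤ x) (hx1 : x < 1) (m : ℕ)
    (hm2 : dy (m+1) < 1 - x) :
    (1-ρ)^t / ((1-x)^r * (1-ρ*x)^(s+t-r))
      ≤ (1-ρ)^t / (dy (m+1) ^ r * (max (1-ρ) (dy (m+1))) ^ (s+t-r)) := by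
  have hρx : max (1-ρ) (dy (m+1)) ≤ 1 - ρ*x := by
    apply max_le
    · nlinarith
    · nlinarith
  have h1 : dy (m+1) ^ r ≤ (1-x)^r :=
    Real.rpow_le_rpow (dy_pos _).le hm2.le hr0
  have h2 : (max (1-ρ) (dy (m+1))) ^ (s+t-r) ≤ (1-ρ*x)^(s+t-r) :=
    Real.rpow_le_rpow (le_max_of_le_right (dy_pos _).le) hρx hst.le
  apply div_le_div_of_nonneg_left
  · exact Real.rpow_nonneg (by linarith) t
  · have := dy_pos (m+1)
    positivity
  · exact mul_le_mul h1 h2 (Real.rpow_nonneg (le_max_of_le_right (dy_pos _).le) _) (Real.rpow_nonneg (by linarith) _)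


lemma key_term (s t r C ε : ℝ) (hs : 0 < s) (ht : 0 < t) (hr0 : 0 ≤ r) (hrs : r < s)
    (hC : 0 < C) (hε0 : 0 < ε) (N n : ℕ) (hN1 : ε ≤ dy N) (hN2 : dy (N+1) < ε) :
    (ε^t / (dy (n+1) ^ r * (max ε (dy (n+1))) ^ (s+t-r))) * (C * dy n ^ s)
      ≤ (C * (2:ℝ)^(s+t)) *
        (if n ≤ N then ((2:ℝ)^(-t))^(N-n) else ((2:ℝ)^(r-s))^(n-(N+1))) := by
  have h2 : (0:ℝ) < 2 := by norm_num
  have hdy := dy_pos (n+1)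
  have hCd : (0:ℝ) ≤ C * dy n ^ s := mul_nonneg hC.le (Real.rpow_nonneg (dy_pos n).le s)
  have hdns : dy n ^ s = ((2:ℝ)^((n:ℝ)*s))⁻¹ := by
    rw [dy_rpow, neg_mul, Real.rpow_neg h2.le]
  by_cases hn : n ≤ N
  · rw [if_pos hn]
    have hb : ε^t / (dy (n+1) ^ r * (max ε (dy (n+1))) ^ (s+t-r))
        ≤ ε^t / (dy (n+1) ^ r * dy (n+1) ^ (s+t-r)) := by
      apply div_le_div_of_nonneg_left (Real.rpow_nonneg hε0.le t) (by positivity)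
      apply mul_le_mul_of_nonneg_left _ (Real.rpow_nonneg hdy.le _)
      exact Real.rpow_le_rpow hdy.le (le_max_right _ _) (by linarith)
    have e1 : dy (n+1) ^ r * dy (n+1) ^ (s+t-r) = ((2:ℝ)^(((n:ℝ)+1)*(s+t)))⁻¹ := by
      rw [← Real.rpow_add hdy, dy_rpow,
        show (-(((n:ℕ)+1:ℕ):ℝ)*(r+(s+t-r))) = -(((n:ℝ)+1)*(s+t)) by push_cast; ring,
        Real.rpow_neg h2.le]
    have e3 : (2:ℝ)^(((n:ℝ)+1)*(s+t) - (n:ℝ)*s)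
        = (2:ℝ)^(((n:ℝ)+1)*(s+t)) * ((2:ℝ)^((n:ℝ)*s))⁻¹ := by
      rw [Real.rpow_sub h2, div_eq_mul_inv]
    have heq : ε^t / (dy (n+1) ^ r * dy (n+1) ^ (s+t-r)) * (C * dy n ^ s)
        = C * (ε^t * (2:ℝ)^(((n:ℝ)+1)*(s+t) - (n:ℝ)*s)) := by
      rw [e1, hdns, e3, div_eq_mul_inv, inv_inv]; ring
    have hεt : ε^t ≤ (2:ℝ)^(-(N:ℝ)*t) := by
      rw [← dy_rpow]
      exact Real.rpow_le_rpow hε0.le hN1 ht.le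
    have hq : ((2:ℝ)^(-t))^(N-n) = (2:ℝ)^(-t * ((N:ℝ)-(n:ℝ))) := by
      rw [← Real.rpow_natCast ((2:ℝ)^(-t)) (N-n), ← Real.rpow_mul h2.le, Nat.cast_sub hn]
    have hfin : ε^t * (2:ℝ)^(((n:ℝ)+1)*(s+t) - (n:ℝ)*s)
        ≤ (2:ℝ)^(s+t) * ((2:ℝ)^(-t))^(N-n) := by
      rw [hq, ← Real.rpow_add h2]
      calc ε^t * (2:ℝ)^(((n:ℝ)+1)*(s+t) - (n:ℝ)*s)
          ≤ (2:ℝ)^(-(N:ℝ)*t) * (2:ℝ)^(((n:ℝ)+1)*(s+t) - (n:ℝ)*s) :=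
            mul_le_mul_of_nonneg_right hεt (Real.rpow_nonneg h2.le _)
        _ = (2:ℝ)^(-(N:ℝ)*t + (((n:ℝ)+1)*(s+t) - (n:ℝ)*s)) := (Real.rpow_add h2 _ _).symm
        _ ≤ (2:ℝ)^(s+t + -t * ((N:ℝ)-(n:ℝ))) := by
            apply Real.rpow_le_rpow_of_exponent_le one_le_two
            ring_nf
            linarith
    calc _ ≤ ε^t / (dy (n+1) ^ r * dy (n+1) ^ (s+t-r)) * (C * dy n ^ s) :=
            mul_le_mul_of_nonneg_right hb hCd
      _ = C * (ε^t * (2:ℝ)^(((n:ℝ)+1)*(s+t) - (n:ℝ)*s)) := heq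
      _ ≤ C * ((2:ℝ)^(s+t) * ((2:ℝ)^(-t))^(N-n)) := mul_le_mul_of_nonneg_left hfin hC.le
      _ = _ := by ring
  · rw [if_neg hn]
    push_neg at hn
    have hb : ε^t / (dy (n+1) ^ r * (max ε (dy (n+1))) ^ (s+t-r))
        ≤ ε^t / (dy (n+1) ^ r * ε ^ (s+t-r)) := by
      apply div_le_div_of_nonneg_left (Real.rpow_nonneg hε0.le t) (by positivity)
      apply mul_le_mul_of_nonneg_left _ (Real.rpow_nonneg hdy.le _)
      exact Real.rpow_le_rpow hε0.le (le_max_left _ _) (by linarith)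
    have e1 : dy (n+1) ^ r = ((2:ℝ)^(((n:ℝ)+1)*r))⁻¹ := by
      rw [dy_rpow, show (-(((n:ℕ)+1:ℕ):ℝ)*r) = -(((n:ℝ)+1)*r) by push_cast; ring,
        Real.rpow_neg h2.le]
    have e4 : ε^t / ε^(s+t-r) = ε^(r-s) := by
      rw [← Real.rpow_sub hε0]; congr 1; ring
    have hBne : ε^(s+t-r) ≠ 0 := (Real.rpow_pos_of_pos hε0 _).ne'
    have heq : ε^t / (dy (n+1) ^ r * ε ^ (s+t-r)) = ε^(r-s) * (2:ℝ)^(((n:ℝ)+1)*r) := by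
      rw [e1, ← e4]
      field_simp
    have hεrs : ε^(r-s) ≤ (2:ℝ)^(((N:ℝ)+1)*(s-r)) := by
      calc ε^(r-s) ≤ dy (N+1) ^ (r-s) :=
            Real.rpow_le_rpow_of_nonpos (dy_pos (N+1)) hN2.le (by linarith)
        _ = (2:ℝ)^(((N:ℝ)+1)*(s-r)) := by
            rw [dy_rpow]; congr 1; push_cast; ring
    have hq : ((2:ℝ)^(r-s))^(n-(N+1)) = (2:ℝ)^((r-s) * ((n:ℝ)-((N:ℝ)+1))) := by
      rw [← Real.rpow_natCast ((2:ℝ)^(r-s)) (n-(N+1)), ← Real.rpow_mul h2.le,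
        Nat.cast_sub (by omega)]
      congr 1; push_cast; ring
    calc _ ≤ ε^t / (dy (n+1) ^ r * ε ^ (s+t-r)) * (C * dy n ^ s) :=
            mul_le_mul_of_nonneg_right hb hCd
      _ = C * (ε^(r-s) * ((2:ℝ)^(((n:ℝ)+1)*r) * (2:ℝ)^(-(n:ℝ)*s))) := by
            rw [heq, dy_rpow]; ring
      _ ≤ C * ((2:ℝ)^(((N:ℝ)+1)*(s-r)) * ((2:ℝ)^(((n:ℝ)+1)*r) * (2:ℝ)^(-(n:ℝ)*s))) := by
            apply mul_le_mul_of_nonneg_left _ hC.le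
            apply mul_le_mul_of_nonneg_right hεrs
            exact mul_nonneg (Real.rpow_nonneg h2.le _) (Real.rpow_nonneg h2.le _)
      _ = C * (2:ℝ)^(((N:ℝ)+1)*(s-r) + ((((n:ℝ)+1)*r) + -(n:ℝ)*s)) := by
            rw [Real.rpow_add h2 (((N:ℝ)+1)*(s-r)), Real.rpow_add h2]
      _ ≤ C * (2:ℝ)^(s+t + (r-s) * ((n:ℝ)-((N:ℝ)+1))) := by
            apply mul_le_mul_of_nonneg_left _ hC.le
            apply Real.rpow_le_rpow_of_exponent_le one_le_two
            nlinarith [hrs, ht]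
      _ = _ := by rw [hq, Real.rpow_add h2]; ring

lemma tsum_z_le (q1 q2 : ℝ) (h10 : 0 ≤ q1) (h11 : q1 < 1) (h20 : 0 ≤ q2) (h21 : q2 < 1)
    (N : ℕ) :
    (∑' n : ℕ, ENNReal.ofReal (if n ≤ N then q1^(N-n) else q2^(n-(N+1))))
      ≤ ENNReal.ofReal ((1-q1)⁻¹ + (1-q2)⁻¹) := by
  rw [← Summable.sum_add_tsum_nat_add' (f := fun n => ENNReal.ofReal
      (if n ≤ N then q1^(N-n) else q2^(n-(N+1)))) (k := N+1) ENNReal.summable,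
    ENNReal.ofReal_add (inv_nonneg.mpr (by linarith)) (inv_nonneg.mpr (by linarith))]
  apply add_le_add
  · have he : ∀ n ∈ Finset.range (N+1),
        ENNReal.ofReal (if n ≤ N then q1^(N-n) else q2^(n-(N+1)))
          = ENNReal.ofReal (q1^(N-n)) := by
      intro n hn
      rw [if_pos (by simpa [Nat.lt_succ_iff] using Finset.mem_range.mp hn)]
    rw [Finset.sum_congr rfl he, ← ENNReal.ofReal_sum_of_nonneg
      (fun n _ => pow_nonneg h10 _)]
    apply ENNReal.ofReal_le_ofReal
    calc ∑ n ∈ Finset.range (N+1), q1^(N-n)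
        = ∑ n ∈ Finset.range (N+1), q1^n := by
          rw [← Finset.sum_range_reflect (fun k => q1^k) (N+1)]
          exact Finset.sum_congr rfl (fun n hn => by congr 1)
      _ ≤ ∑' n : ℕ, q1^n := Summable.sum_le_tsum _ (fun n _ => pow_nonneg h10 _)
            (summable_geometric_of_lt_one h10 h11)
      _ = (1-q1)⁻¹ := tsum_geometric_of_lt_one h10 h11
  · have he : ∀ k : ℕ, ENNReal.ofReal
        (if k + (N+1) ≤ N then q1^(N-(k+(N+1))) else q2^((k+(N+1))-(N+1)))
          = ENNReal.ofReal (q2^k) := by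
      intro k
      rw [if_neg (by omega)]
      congr 2
      omega
    refine le_of_eq ?_
    calc (∑' k : ℕ, ENNReal.ofReal
          (if k + (N+1) ≤ N then q1^(N-(k+(N+1))) else q2^((k+(N+1))-(N+1))))
        = ∑' k : ℕ, ENNReal.ofReal (q2^k) := tsum_congr he
      _ = ENNReal.ofReal (∑' k : ℕ, q2^k) := (ENNReal.ofReal_tsum_of_nonneg
            (fun k => pow_nonneg h20 _) (summable_geometric_of_lt_one h20 h21)).symm
      _ = ENNReal.ofReal ((1-q2)⁻¹) := by rw [tsum_geometric_of_lt_one h20 h21]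

theorem stmt_1 (s t r : ℝ) (hs : 0 < s) (ht : 0 < t) (hr0 : 0 ≤ r) (hrs : r < s)
    (μ : Measure ℝ) [IsFiniteMeasure μ] (C : ℝ) (hC : 0 < C)
    (hCar : ∀ x ∈ Ico (0:ℝ) 1, μ (Ico x 1) ≤ ENNReal.ofReal (C * (1 - x) ^ s)) :
    ∃ M : ℝ, ∀ a ∈ Metric.ball (0:ℂ) 1,
      (∫⁻ x in Ico (0:ℝ) 1,
        ENNReal.ofReal ((1 - ‖a‖) ^ t / ((1 - x) ^ r * (1 - ‖a‖ * x) ^ (s + t - r))) ∂μ)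
        ≤ ENNReal.ofReal M := by
  have h2 : (0:ℝ) < 2 := by norm_num
  set q1 : ℝ := (2:ℝ)^(-t) with hq1def
  set q2 : ℝ := (2:ℝ)^(r-s) with hq2def
  have hq10 : 0 ≤ q1 := Real.rpow_nonneg h2.le _
  have hq11 : q1 < 1 := Real.rpow_lt_one_of_one_lt_of_neg one_lt_two (by linarith)
  have hq20 : 0 ≤ q2 := Real.rpow_nonneg h2.le _
  have hq21 : q2 < 1 := Real.rpow_lt_one_of_one_lt_of_neg one_lt_two (by linarith)
  refine ⟨C * (2:ℝ)^(s+t) * ((1 - q1)⁻¹ + (1 - q2)⁻¹), ?_⟩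
  intro a ha
  have hρ1 : ‖a‖ < 1 := mem_ball_zero_iff.mp ha
  have hρ0 : (0:ℝ) ≤ ‖a‖ := norm_nonneg a
  set ρ := ‖a‖ with hρdef
  have hε0 : 0 < 1 - ρ := by linarith
  have hstr : 0 < s + t - r := by linarith
  obtain ⟨N, hN1, hN2⟩ := exists_dy (1-ρ) hε0 (by linarith)
  set b : ℕ → ℝ := fun n =>
    (1-ρ)^t / (dy (n+1) ^ r * (max (1-ρ) (dy (n+1))) ^ (s+t-r)) with hbdef
  have hbnn : ∀ n, 0 ≤ b n := by
    intro n
    apply div_nonneg (Real.rpow_nonneg hε0.le _)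
    exact mul_nonneg (Real.rpow_nonneg (dy_pos _).le _)
      (Real.rpow_nonneg (le_max_of_le_right (dy_pos _).le) _)
  -- step 1 : pointwise bound
  have step1 : ∀ x ∈ Ico (0:ℝ) 1,
      ENNReal.ofReal ((1 - ρ) ^ t / ((1 - x) ^ r * (1 - ρ * x) ^ (s + t - r)))
        ≤ ∑' n : ℕ, (Ici (1 - dy n)).indicator
            (fun _ => ENNReal.ofReal (b n)) x := by
    intro x hx
    obtain ⟨hx0, hx1⟩ := hx
    obtain ⟨m, hm1, hm2⟩ := exists_dy (1-x) (by linarith) (by linarith)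
    have hxm : x ∈ Ici (1 - dy m) := by simp only [mem_Ici]; linarith
    calc ENNReal.ofReal ((1 - ρ) ^ t / ((1 - x) ^ r * (1 - ρ * x) ^ (s + t - r)))
        ≤ ENNReal.ofReal (b m) := ENNReal.ofReal_le_ofReal
          (key_pointwise s t r ρ x hr0 hstr hρ0 hρ1 hx0 hx1 m hm2)
      _ = (Ici (1 - dy m)).indicator (fun _ => ENNReal.ofReal (b m)) x :=
          (indicator_of_mem hxm (fun _ => ENNReal.ofReal (b m))).symm
      _ ≤ _ := ENNReal.le_tsum m
  -- step 2 : integrate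
  calc (∫⁻ x in Ico (0:ℝ) 1,
        ENNReal.ofReal ((1 - ρ) ^ t / ((1 - x) ^ r * (1 - ρ * x) ^ (s + t - r))) ∂μ)
      ≤ ∫⁻ x in Ico (0:ℝ) 1, ∑' n : ℕ, (Ici (1 - dy n)).indicator
          (fun _ => ENNReal.ofReal (b n)) x ∂μ :=
        setLIntegral_mono' measurableSet_Ico step1
    _ = ∑' n : ℕ, ∫⁻ x in Ico (0:ℝ) 1, (Ici (1 - dy n)).indicator
          (fun _ => ENNReal.ofReal (b n)) x ∂μ :=
        lintegral_tsum (fun n =>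
          (measurable_const.indicator measurableSet_Ici).aemeasurable)
    _ = ∑' n : ℕ, ENNReal.ofReal (b n) * μ (Ico (1 - dy n) 1) := by
        refine tsum_congr (fun n => ?_)
        rw [lintegral_indicator measurableSet_Ici, setLIntegral_const,
          Measure.restrict_apply measurableSet_Ici]
        congr 1
        have h1 : Ici (1 - dy n) ∩ Ico (0:ℝ) 1 = Ico (1 - dy n) 1 := by
          ext y
          simp only [mem_inter_iff, mem_Ici, mem_Ico]
          constructor
          · rintro ⟨hy1, hy2, hy3⟩; exact ⟨hy1, hy3⟩
          · rintro ⟨hy1, hy2⟩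
            exact ⟨hy1, le_trans (by linarith [dy_le_one n]) hy1, hy2⟩
        rw [h1]
    _ ≤ ∑' n : ℕ, ENNReal.ofReal (b n) * ENNReal.ofReal (C * dy n ^ s) := by
        gcongr with n
        have hmem : (1 - dy n) ∈ Ico (0:ℝ) 1 := by
          constructor
          · linarith [dy_le_one n]
          · linarith [dy_pos n]
        have := hCar (1 - dy n) hmem
        simpa using this
    _ = ∑' n : ℕ, ENNReal.ofReal (b n * (C * dy n ^ s)) := by
        refine tsum_congr (fun n => ?_)
        rw [← ENNReal.ofReal_mul (hbnn n)]
    _ ≤ ∑' n : ℕ, ENNReal.ofReal ((C * (2:ℝ)^(s+t)) *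
          (if n ≤ N then q1^(N-n) else q2^(n-(N+1)))) := by
        refine ENNReal.tsum_le_tsum (fun n => ENNReal.ofReal_le_ofReal ?_)
        exact key_term s t r C (1-ρ) hs ht hr0 hrs hC hε0 N n hN1 hN2
    _ = ENNReal.ofReal (C * (2:ℝ)^(s+t)) *
          ∑' n : ℕ, ENNReal.ofReal (if n ≤ N then q1^(N-n) else q2^(n-(N+1))) := by
        rw [← ENNReal.tsum_mul_left]
        refine tsum_congr (fun n => ?_)
        rw [← ENNReal.ofReal_mul (by positivity)]
    _ ≤ ENNReal.ofReal (C * (2:ℝ)^(s+t)) * ENNReal.ofReal ((1 - q1)⁻¹ + (1 - q2)⁻¹) :=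
        mul_le_mul_right (tsum_z_le q1 q2 hq10 hq11 hq20 hq21 N) _
    _ = ENNReal.ofReal (C * (2:ℝ)^(s+t) * ((1 - q1)⁻¹ + (1 - q2)⁻¹)) := by
        rw [← ENNReal.ofReal_mul (by positivity)]
end

section
/- Let s > 0, t > 0, 0 ≤ r < s, and let μ be a finite positive Borel measure on [0,1). If sup over a ∈ 𝔻 of ∫_{[0,1)} (1-|a|)^t / ((1-x)^r |1-ax|^{s+t-r}) dμ(x) < ∞, then μ is an s-Carleson measure, i.e., μ([x,1)) ≤ C(1-x)^s for all x ∈ [0,1). -/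
open MeasureTheory Set

theorem stmt_2 (s t r : ℝ) (hs : 0 < s) (ht : 0 < t) (hr0 : 0 ≤ r) (hrs : r < s)
    (μ : Measure ℝ) [IsFiniteMeasure μ] (M : ℝ)
    (hsup : ∀ a ∈ Metric.ball (0:ℂ) 1,
      (∫⁻ x in Ico (0:ℝ) 1,
        ENNReal.ofReal ((1 - ‖a‖) ^ t /
          ((1 - x) ^ r * ‖1 - a * (x:ℂ)‖ ^ (s + t - r))) ∂μ)
        ≤ ENNReal.ofReal M) :
    ∃ C : ℝ, 0 < C ∧ ∀ x ∈ Ico (0:ℝ) 1, μ (Ico x 1) ≤ ENNReal.ofReal (C * (1 - x) ^ s) := by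
  set K : ℝ := (2:ℝ) ^ (s + t - r) with hKdef
  have hstr : 0 < s + t - r := by linarith
  have hK : 0 < K := Real.rpow_pos_of_pos two_pos _
  set M' : ℝ := max M 0 with hM'def
  refine ⟨M' * K + 1, by positivity, ?_⟩
  intro b hb
  obtain ⟨hb0, hb1⟩ := hb
  have hu : (0:ℝ) < 1 - b := by linarith
  have ha : (b:ℂ) ∈ Metric.ball (0:ℂ) 1 := by
    simp [Complex.norm_real, Real.norm_eq_abs, abs_of_nonneg hb0, hb1]
  have H := hsup (b:ℂ) ha
  have habs : ‖(b:ℂ)‖ = b := by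
    simp [Complex.norm_real, Real.norm_eq_abs, abs_of_nonneg hb0]
  -- pointwise lower bound on Ico b 1
  have key : ∀ x ∈ Ico b 1,
      ENNReal.ofReal ((1 - b) ^ (-s) / K)
        ≤ ENNReal.ofReal ((1 - ‖(b:ℂ)‖) ^ t /
          ((1 - x) ^ r * (‖1 - (b:ℂ) * (x:ℂ)‖) ^ (s + t - r))) := by
    intro x hx
    obtain ⟨hbx, hx1⟩ := hx
    have hx0 : 0 ≤ x := le_trans hb0 hbx
    have hv : (0:ℝ) < 1 - x := by linarith
    have hw : (0:ℝ) < 1 - b * x := by nlinarith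
    have habsw : ‖1 - (b:ℂ) * (x:ℂ)‖ = 1 - b * x := by
      rw [show ((1:ℂ) - (b:ℂ) * (x:ℂ)) = ((1 - b * x : ℝ) : ℂ) by push_cast; ring,
        Complex.norm_real, Real.norm_eq_abs, abs_of_pos hw]
    rw [habs, habsw]
    apply ENNReal.ofReal_le_ofReal
    have hD : 0 < (1 - x) ^ r * (1 - b * x) ^ (s + t - r) := by positivity
    have hD2 : (1 - x) ^ r * (1 - b * x) ^ (s + t - r)
        ≤ (1 - b) ^ r * (2 * (1 - b)) ^ (s + t - r) := by
      apply mul_le_mul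
      · exact Real.rpow_le_rpow hv.le (by linarith) hr0
      · exact Real.rpow_le_rpow hw.le (by nlinarith) hstr.le
      · positivity
      · positivity
    calc (1 - b) ^ (-s) / K ≤ (1 - b) ^ t / ((1 - b) ^ r * (2 * (1 - b)) ^ (s + t - r)) := by
          rw [Real.mul_rpow two_pos.le hu.le, ← hKdef,
            show (1-b) ^ r * (K * (1-b) ^ (s+t-r)) = K * ((1-b) ^ r * (1-b) ^ (s+t-r)) by ring,
            ← Real.rpow_add hu, show r + (s + t - r) = t + s by ring,
            Real.rpow_add hu t s, Real.rpow_neg hu.le]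
          rw [div_le_div_iff₀ (by positivity) (by positivity)]
          field_simp
          exact le_refl _
      _ ≤ (1 - b) ^ t / ((1 - x) ^ r * (1 - b * x) ^ (s + t - r)) :=
          div_le_div_of_nonneg_left (by positivity) hD hD2
  have hsub : Ico b 1 ⊆ Ico (0:ℝ) 1 := Ico_subset_Ico hb0 le_rfl
  have hconst : ENNReal.ofReal ((1 - b) ^ (-s) / K) * μ (Ico b 1)
      ≤ ENNReal.ofReal M' := by
    calc ENNReal.ofReal ((1 - b) ^ (-s) / K) * μ (Ico b 1)
        = ∫⁻ _ in Ico b 1, ENNReal.ofReal ((1 - b) ^ (-s) / K) ∂μ := by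
          rw [setLIntegral_const]
      _ ≤ ∫⁻ x in Ico b 1,
            ENNReal.ofReal ((1 - ‖(b:ℂ)‖) ^ t /
              ((1 - x) ^ r * (‖1 - (b:ℂ) * (x:ℂ)‖) ^ (s + t - r))) ∂μ :=
          setLIntegral_mono' measurableSet_Ico key
      _ ≤ ∫⁻ x in Ico (0:ℝ) 1,
            ENNReal.ofReal ((1 - ‖(b:ℂ)‖) ^ t /
              ((1 - x) ^ r * (‖1 - (b:ℂ) * (x:ℂ)‖) ^ (s + t - r))) ∂μ :=
          lintegral_mono_set hsub
      _ ≤ ENNReal.ofReal M := H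
      _ ≤ ENNReal.ofReal M' := ENNReal.ofReal_le_ofReal (le_max_left _ _)
  have hd : (0:ℝ) < (1 - b) ^ (-s) / K := by positivity
  have hμ : μ (Ico b 1) ≤ ENNReal.ofReal M' / ENNReal.ofReal ((1 - b) ^ (-s) / K) := by
    rw [ENNReal.le_div_iff_mul_le (Or.inl (ENNReal.ofReal_pos.2 hd).ne')
      (Or.inl ENNReal.ofReal_ne_top)]
    rw [mul_comm]; exact hconst
  refine hμ.trans ?_
  rw [← ENNReal.ofReal_div_of_pos hd]
  apply ENNReal.ofReal_le_ofReal
  rw [div_div_eq_mul_div, Real.rpow_neg hu.le, div_eq_mul_inv, inv_inv]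
  exact mul_le_mul_of_nonneg_right (by linarith) (Real.rpow_nonneg hu.le s)
end

section
/- Let s > 0, t > 0 and 0 ≤ r < s. For a finite positive Borel measure μ on [0,1), the following are equivalent: (i) μ is an s-Carleson measure; (ii) sup_{a∈𝔻} ∫_{[0,1)} (1-|a|)^t / ((1-x)^r (1-|a|x)^{s+t-r}) dμ(x) < ∞; (iii) sup_{a∈𝔻} ∫_{[0,1)} (1-|a|)^t / ((1-x)^r |1-ax|^{s+t-r}) dμ(x) < ∞. -/
open MeasureTheory Set Real


/-- Superlevel set bound from the Carleson condition. -/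
lemma superlevel_bound (s C p : ℝ) (hC : 0 < C) (hp : 0 < p)
    (μ : Measure ℝ)
    (hμ : ∀ x ∈ Ico (0:ℝ) 1, μ (Ico x 1) ≤ ENNReal.ofReal (C * (1 - x) ^ s))
    (A : Set ℝ) (hA : A ⊆ Ico (0:ℝ) 1) (l : ℝ) (hl : 1 < l) :
    μ ({x | l < |1 - x| ^ (-p)} ∩ A) ≤ ENNReal.ofReal (C * l ^ (-(s/p))) := by
  have hl0 : (0:ℝ) < l := lt_trans one_pos hl
  have hnp : -p < 0 := neg_neg_of_pos hp
  have hlp : (0:ℝ) < l ^ (-p)⁻¹ := rpow_pos_of_pos hl0 _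
  have hlp1 : l ^ (-p)⁻¹ < 1 :=
    rpow_lt_one_of_one_lt_of_neg hl (inv_lt_zero.mpr hnp)
  set u := 1 - l ^ (-p)⁻¹ with hu
  have hu0 : 0 ≤ u := by simp only [hu]; linarith
  have hu1 : u < 1 := by simp only [hu]; linarith
  have hsub : {x | l < |1 - x| ^ (-p)} ∩ A ⊆ Ico u 1 := by
    rintro x ⟨hx, hxA⟩
    obtain ⟨hx0, hx1⟩ := hA hxA
    have h1x : 0 < 1 - x := by linarith
    rw [mem_setOf_eq, abs_of_pos h1x] at hx
    have h2 : 1 - x < l ^ (-p)⁻¹ := (lt_rpow_inv_iff_of_neg h1x hl0 hnp).2 hx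
    exact ⟨by simp only [hu]; linarith, hx1⟩
  calc μ ({x | l < |1 - x| ^ (-p)} ∩ A) ≤ μ (Ico u 1) := measure_mono hsub
    _ ≤ ENNReal.ofReal (C * (1 - u) ^ s) := hμ u ⟨hu0, hu1⟩
    _ = ENNReal.ofReal (C * l ^ (-(s/p))) := by
        congr 1
        rw [hu]
        rw [show (1:ℝ) - (1 - l ^ (-p)⁻¹) = l ^ (-p)⁻¹ by ring,
          ← Real.rpow_mul hl0.le]
        congr 2
        field_simp


lemma lint_Ioi_rpow (e T C : ℝ) (he : e < -1) (hT : 0 < T) (hC : 0 ≤ C) :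
    ∫⁻ l in Ioi T, ENNReal.ofReal (C * l ^ e) ≤ ENNReal.ofReal (C * (-T ^ (e+1) / (e+1))) := by
  have hint : IntegrableOn (fun l : ℝ => C * l ^ e) (Ioi T) :=
    (integrableOn_Ioi_rpow_of_lt he hT).const_mul C
  have hnn : 0 ≤ᵐ[volume.restrict (Ioi T)] fun l : ℝ => C * l ^ e := by
    filter_upwards [ae_restrict_mem measurableSet_Ioi] with l hl
    exact mul_nonneg hC (rpow_nonneg (le_of_lt (hT.trans hl)) _)
  rw [← ofReal_integral_eq_lintegral_ofReal hint hnn]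
  apply ENNReal.ofReal_le_ofReal
  rw [MeasureTheory.integral_const_mul, integral_Ioi_rpow_of_lt he hT]

lemma lint_Ioc_rpow (e T C : ℝ) (he : -1 < e) (he0 : e < 0) (hT : 1 ≤ T) (hC : 0 ≤ C) :
    ∫⁻ l in Ioc 1 T, ENNReal.ofReal (C * l ^ e) ≤ ENNReal.ofReal (C * T ^ (e+1) / (e+1)) := by
  have hcont : ContinuousOn (fun l : ℝ => C * l ^ e) (Icc 1 T) := by
    apply continuousOn_const.mul
    apply ContinuousOn.rpow_const continuousOn_id
    intro x hx
    left
    intro h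
    simp only [id_eq] at h
    have := hx.1
    linarith
  have hint : IntegrableOn (fun l : ℝ => C * l ^ e) (Ioc 1 T) :=
    (hcont.integrableOn_compact isCompact_Icc).mono_set Ioc_subset_Icc_self
  have hnn : 0 ≤ᵐ[volume.restrict (Ioc 1 T)] fun l : ℝ => C * l ^ e := by
    filter_upwards [ae_restrict_mem measurableSet_Ioc] with l hl
    exact mul_nonneg hC (rpow_nonneg (by linarith [hl.1]) _)
  rw [← ofReal_integral_eq_lintegral_ofReal hint hnn]
  apply ENNReal.ofReal_le_ofReal
  rw [← intervalIntegral.integral_of_le hT, intervalIntegral.integral_const_mul,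
    integral_rpow (Or.inl he)]
  have h1 : (1:ℝ) ^ (e+1) = 1 := one_rpow _
  have he1 : 0 < e + 1 := by linarith
  have hTnn : 0 ≤ T ^ (e+1) := rpow_nonneg (by linarith) _
  rw [h1, mul_div_assoc]
  gcongr
  linarith

lemma lemB (s r C : ℝ) (hs : 0 < s) (hr0 : 0 ≤ r) (hrs : r < s) (hC : 0 < C)
    (μ : Measure ℝ) [IsFiniteMeasure μ]
    (hμ : ∀ x ∈ Ico (0:ℝ) 1, μ (Ico x 1) ≤ ENNReal.ofReal (C * (1 - x) ^ s))
    (b : ℝ) (hb0 : 0 ≤ b) (hb1 : b < 1) :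
    ∫⁻ x in Ioo b 1, ENNReal.ofReal (|1 - x| ^ (-r)) ∂μ
      ≤ ENNReal.ofReal (C * (1 + r/(s-r)) * (1-b) ^ (s-r)) := by
  have h1b : (0:ℝ) < 1 - b := by linarith
  have hmble : AEMeasurable (fun x : ℝ => |1 - x| ^ (-r)) (μ.restrict (Ioo b 1)) :=
    (by fun_prop : Measurable fun x : ℝ => |1 - x| ^ (-r)).aemeasurable
  rw [lintegral_eq_lintegral_meas_lt _
    (ae_of_all _ fun x => rpow_nonneg (abs_nonneg _) _) hmble]
  set ν := μ.restrict (Ioo b 1) with hν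
  set T0 := (1-b) ^ (-r) with hT0
  have hT0_1 : 1 ≤ T0 :=
    one_le_rpow_of_pos_of_le_one_of_nonpos h1b (by linarith) (by linarith)
  have hT0_0 : (0:ℝ) < T0 := lt_of_lt_of_le one_pos hT0_1
  rw [← Ioc_union_Ioi_eq_Ioi hT0_0.le, lintegral_union measurableSet_Ioi
    (Ioc_disjoint_Ioi le_rfl)]
  have part1 : ∫⁻ l in Ioc (0:ℝ) T0, ν {x | l < |1 - x| ^ (-r)}
      ≤ ENNReal.ofReal (C * (1-b) ^ (s-r)) := by
    calc ∫⁻ l in Ioc (0:ℝ) T0, ν {x | l < |1 - x| ^ (-r)}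
        ≤ ∫⁻ _ in Ioc (0:ℝ) T0, ENNReal.ofReal (C * (1-b) ^ s) := by
          apply setLIntegral_mono' measurableSet_Ioc
          intro l _
          calc ν {x | l < |1 - x| ^ (-r)} ≤ ν univ := measure_mono (subset_univ _)
            _ = μ (Ioo b 1) := by rw [hν, Measure.restrict_apply_univ]
            _ ≤ μ (Ico b 1) := measure_mono Ioo_subset_Ico_self
            _ ≤ ENNReal.ofReal (C * (1-b) ^ s) := hμ b ⟨hb0, hb1⟩
      _ = ENNReal.ofReal (C * (1-b) ^ s) * volume (Ioc (0:ℝ) T0) :=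
          setLIntegral_const _ _
      _ = ENNReal.ofReal (C * (1-b) ^ s * T0) := by
          rw [Real.volume_Ioc, sub_zero, ← ENNReal.ofReal_mul
            (by positivity)]
      _ = ENNReal.ofReal (C * (1-b) ^ (s-r)) := by
          rw [hT0, mul_assoc, ← Real.rpow_add h1b]
          norm_num [sub_eq_add_neg]
  have part2 : ∫⁻ l in Ioi T0, ν {x | l < |1 - x| ^ (-r)}
      ≤ ENNReal.ofReal (C * (r/(s-r)) * (1-b) ^ (s-r)) := by
    rcases eq_or_lt_of_le hr0 with hr | hr
    · -- r = 0
      have hzero : ∀ l ∈ Ioi T0, ν {x | l < |1 - x| ^ (-r)} = 0 := by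
        intro l hl
        have hT0' : T0 = 1 := by rw [hT0, ← hr]; norm_num
        have : {x : ℝ | l < |1 - x| ^ (-r)} = ∅ := by
          ext x
          simp only [mem_setOf_eq, mem_empty_iff_false, iff_false, not_lt, ← hr]
          rw [neg_zero, Real.rpow_zero]
          rw [hT0'] at hl
          exact le_of_lt hl
        rw [this]
        simp
      calc ∫⁻ l in Ioi T0, ν {x | l < |1 - x| ^ (-r)}
          = ∫⁻ _ in Ioi T0, 0 :=
            setLIntegral_congr_fun measurableSet_Ioi hzero
        _ = 0 := by simp
        _ ≤ _ := zero_le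
    · -- 0 < r
      have hsr : 1 < s / r := (one_lt_div hr).2 hrs
      calc ∫⁻ l in Ioi T0, ν {x | l < |1 - x| ^ (-r)}
          ≤ ∫⁻ l in Ioi T0, ENNReal.ofReal (C * l ^ (-(s/r))) := by
            apply setLIntegral_mono' measurableSet_Ioi
            intro l hl
            have hl1 : 1 < l := lt_of_le_of_lt hT0_1 hl
            rw [hν, Measure.restrict_apply' measurableSet_Ioo]
            exact superlevel_bound s C r hC hr μ hμ (Ioo b 1)
              (fun x hx => ⟨le_of_lt (lt_of_le_of_lt hb0 hx.1), hx.2⟩) l hl1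
        _ ≤ ENNReal.ofReal (C * (-T0 ^ (-(s/r)+1) / (-(s/r)+1))) :=
            lint_Ioi_rpow _ _ _ (by linarith) hT0_0 hC.le
        _ = ENNReal.ofReal (C * (r/(s-r)) * (1-b) ^ (s-r)) := by
            congr 1
            have e1 : T0 ^ (-(s/r)+1) = (1-b) ^ (s-r) := by
              rw [hT0, ← Real.rpow_mul h1b.le]
              congr 1
              field_simp
              ring
            rw [e1]
            have hsr0 : (0:ℝ) < s - r := by linarith
            have hw : (-s + r) * (-s + r)⁻¹ = 1 := mul_inv_cancel₀ (by linarith)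
            field_simp
            linear_combination hw
  have hsr0 : (0:ℝ) < s - r := by linarith
  refine le_trans (add_le_add part1 part2) ?_
  rw [← ENNReal.ofReal_add (by positivity) (by positivity)]
  exact ENNReal.ofReal_le_ofReal (le_of_eq (by ring))

lemma lemA (s t C : ℝ) (hs : 0 < s) (ht : 0 < t) (hC : 0 < C)
    (μ : Measure ℝ) [IsFiniteMeasure μ]
    (hμ : ∀ x ∈ Ico (0:ℝ) 1, μ (Ico x 1) ≤ ENNReal.ofReal (C * (1 - x) ^ s))
    (b : ℝ) (hb0 : 0 ≤ b) (hb1 : b < 1) :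
    ∫⁻ x in Icc 0 b, ENNReal.ofReal (|1 - x| ^ (-(s+t))) ∂μ
      ≤ ENNReal.ofReal ((μ univ).toReal + C * ((s+t)/t) * (1-b) ^ (-t)) := by
  have h1b : (0:ℝ) < 1 - b := by linarith
  have hst : (0:ℝ) < s + t := by linarith
  have hmble : AEMeasurable (fun x : ℝ => |1 - x| ^ (-(s+t))) (μ.restrict (Icc 0 b)) :=
    (by fun_prop : Measurable fun x : ℝ => |1 - x| ^ (-(s+t))).aemeasurable
  rw [lintegral_eq_lintegral_meas_lt _
    (ae_of_all _ fun x => rpow_nonneg (abs_nonneg _) _) hmble]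
  set ν := μ.restrict (Icc 0 b) with hν
  set T := (1-b) ^ (-(s+t)) with hT
  have hT1 : 1 ≤ T :=
    one_le_rpow_of_pos_of_le_one_of_nonpos h1b (by linarith) (by linarith)
  have hT0 : (0:ℝ) < T := lt_of_lt_of_le one_pos hT1
  rw [← Ioc_union_Ioi_eq_Ioi (zero_le_one (α := ℝ)),
    lintegral_union measurableSet_Ioi (Ioc_disjoint_Ioi le_rfl),
    ← Ioc_union_Ioi_eq_Ioi hT1,
    lintegral_union measurableSet_Ioi (Ioc_disjoint_Ioi le_rfl)]
  have part0 : ∫⁻ l in Ioc (0:ℝ) 1, ν {x | l < |1 - x| ^ (-(s+t))}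
      ≤ ENNReal.ofReal ((μ univ).toReal) := by
    calc ∫⁻ l in Ioc (0:ℝ) 1, ν {x | l < |1 - x| ^ (-(s+t))}
        ≤ ∫⁻ _ in Ioc (0:ℝ) 1, ENNReal.ofReal ((μ univ).toReal) := by
          apply setLIntegral_mono' measurableSet_Ioc
          intro l _
          calc ν {x | l < |1 - x| ^ (-(s+t))} ≤ ν univ := measure_mono (subset_univ _)
            _ = μ (Icc 0 b) := by rw [hν, Measure.restrict_apply_univ]
            _ ≤ μ univ := measure_mono (subset_univ _)
            _ = ENNReal.ofReal ((μ univ).toReal) :=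
                (ENNReal.ofReal_toReal (measure_ne_top μ _)).symm
      _ = ENNReal.ofReal ((μ univ).toReal) := by
          rw [setLIntegral_const, Real.volume_Ioc]
          norm_num
  have part1 : ∫⁻ l in Ioc (1:ℝ) T, ν {x | l < |1 - x| ^ (-(s+t))}
      ≤ ENNReal.ofReal (C * ((s+t)/t) * (1-b) ^ (-t)) := by
    calc ∫⁻ l in Ioc (1:ℝ) T, ν {x | l < |1 - x| ^ (-(s+t))}
        ≤ ∫⁻ l in Ioc (1:ℝ) T, ENNReal.ofReal (C * l ^ (-(s/(s+t)))) := by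
          apply setLIntegral_mono' measurableSet_Ioc
          intro l hl
          rw [hν, Measure.restrict_apply' measurableSet_Icc]
          exact superlevel_bound s C (s+t) hC hst μ hμ (Icc 0 b)
            (fun x hx => ⟨hx.1, lt_of_le_of_lt hx.2 hb1⟩) l hl.1
      _ ≤ ENNReal.ofReal (C * T ^ (-(s/(s+t))+1) / (-(s/(s+t))+1)) := by
          apply lint_Ioc_rpow _ _ _ ?_ ?_ hT1 hC.le
          · rw [neg_lt, neg_neg]
            exact (div_lt_one hst).2 (by linarith)
          · rw [neg_lt, neg_zero]
            positivity
      _ = ENNReal.ofReal (C * ((s+t)/t) * (1-b) ^ (-t)) := by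
          congr 1
          have e1 : T ^ (-(s/(s+t))+1) = (1-b) ^ (-t) := by
            rw [hT, ← Real.rpow_mul h1b.le]
            congr 1
            field_simp
            ring
          rw [e1]
          have he : -(s/(s+t))+1 = t/(s+t) := by field_simp; ring
          rw [he]
          rw [mul_div_assoc, div_div_eq_mul_div]
          ring
  have part2 : ∫⁻ l in Ioi T, ν {x | l < |1 - x| ^ (-(s+t))} = 0 := by
    have hzero : ∀ l ∈ Ioi T, ν {x | l < |1 - x| ^ (-(s+t))} = 0 := by
      intro l hl
      rw [hν, Measure.restrict_apply' measurableSet_Icc]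
      have : {x : ℝ | l < |1 - x| ^ (-(s+t))} ∩ Icc 0 b = ∅ := by
        ext x
        simp only [mem_inter_iff, mem_setOf_eq, mem_Icc, mem_empty_iff_false, iff_false,
          not_and, and_imp]
        intro hx hx0 hx1
        have h1x : (0:ℝ) < 1 - x := by linarith
        rw [abs_of_pos h1x] at hx
        have : (1-x) ^ (-(s+t)) ≤ (1-b) ^ (-(s+t)) :=
          rpow_le_rpow_of_nonpos h1b (by linarith) (by linarith)
        rw [← hT] at this
        linarith [lt_of_lt_of_le hx this, mem_Ioi.1 hl]
      rw [this, measure_empty]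
    calc ∫⁻ l in Ioi T, ν {x | l < |1 - x| ^ (-(s+t))}
        = ∫⁻ _ in Ioi T, 0 :=
          setLIntegral_congr_fun measurableSet_Ioi hzero
      _ = 0 := by simp
  rw [part2, add_zero]
  refine le_trans (add_le_add part0 part1) ?_
  rw [← ENNReal.ofReal_add ENNReal.toReal_nonneg (by positivity)]

theorem stmt_3 (s t r : ℝ) (hs : 0 < s) (ht : 0 < t) (hr0 : 0 ≤ r) (hrs : r < s)
    (μ : Measure ℝ) [IsFiniteMeasure μ] :
    List.TFAE
      [ (∃ C : ℝ, 0 < C ∧ ∀ x ∈ Ico (0:ℝ) 1, μ (Ico x 1) ≤ ENNReal.ofReal (C * (1 - x) ^ s)),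
        (∃ M : ℝ, ∀ a ∈ Metric.ball (0:ℂ) 1,
          (∫⁻ x in Ico (0:ℝ) 1,
            ENNReal.ofReal ((1 - ‖a‖) ^ t / ((1 - x) ^ r * (1 - ‖a‖ * x) ^ (s + t - r))) ∂μ)
            ≤ ENNReal.ofReal M),
        (∃ M : ℝ, ∀ a ∈ Metric.ball (0:ℂ) 1,
          (∫⁻ x in Ico (0:ℝ) 1,
            ENNReal.ofReal ((1 - ‖a‖) ^ t /
              ((1 - x) ^ r * ‖1 - a * (x:ℂ)‖ ^ (s + t - r))) ∂μ)
            ≤ ENNReal.ofReal M) ] := by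
  have hsr0 : (0:ℝ) < s - r := by linarith
  have hstr : (0:ℝ) < s + t - r := by linarith
  tfae_have 1 → 2 := by
    rintro ⟨C, hC, hμC⟩
    refine ⟨(μ univ).toReal + C * ((s+t)/t) + C * (1 + r/(s-r)), fun a ha => ?_⟩
    set b := ‖a‖ with hb
    have hb0 : 0 ≤ b := norm_nonneg a
    have hb1 : b < 1 := by simpa [hb] using mem_ball_zero_iff.1 ha
    have h1b : (0:ℝ) < 1 - b := by linarith
    have hsplit : Ico (0:ℝ) 1 = Icc 0 b ∪ Ioo b 1 := by
      ext x
      simp only [mem_Ico, mem_union, mem_Icc, mem_Ioo]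
      constructor
      · rintro ⟨h0, h1⟩
        rcases le_or_gt x b with h | h
        · exact Or.inl ⟨h0, h⟩
        · exact Or.inr ⟨h, h1⟩
      · rintro (⟨h0, h⟩ | ⟨h, h1⟩)
        · exact ⟨h0, lt_of_le_of_lt h hb1⟩
        · exact ⟨le_trans hb0 h.le, h1⟩
    rw [hsplit, lintegral_union measurableSet_Ioo
      (by rw [Set.disjoint_left]; rintro x ⟨_, hxb⟩ ⟨hbx, _⟩; exact absurd hbx (not_lt.2 hxb))]
    have pieceA : ∫⁻ x in Icc (0:ℝ) b,
        ENNReal.ofReal ((1 - b) ^ t / ((1 - x) ^ r * (1 - b * x) ^ (s + t - r))) ∂μ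
        ≤ ENNReal.ofReal ((μ univ).toReal + C * ((s+t)/t)) := by
      calc ∫⁻ x in Icc (0:ℝ) b,
          ENNReal.ofReal ((1 - b) ^ t / ((1 - x) ^ r * (1 - b * x) ^ (s + t - r))) ∂μ
          ≤ ∫⁻ x in Icc (0:ℝ) b,
            ENNReal.ofReal ((1-b)^t) * ENNReal.ofReal (|1-x| ^ (-(s+t))) ∂μ := by
            apply setLIntegral_mono' measurableSet_Icc
            intro x hx
            rw [← ENNReal.ofReal_mul (rpow_nonneg h1b.le _)]
            apply ENNReal.ofReal_le_ofReal
            obtain ⟨hx0, hxb⟩ := hx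
            have h1x : (0:ℝ) < 1 - x := by linarith
            have hbx : 1 - x ≤ 1 - b * x := by nlinarith
            have h0bx : (0:ℝ) < 1 - b*x := lt_of_lt_of_le h1x hbx
            have hden : (1-x) ^ (s+t) ≤ (1-x) ^ r * (1 - b*x) ^ (s+t-r) := by
              calc (1-x) ^ (s+t) = (1-x)^r * (1-x)^(s+t-r) := by
                    rw [← Real.rpow_add h1x]; ring_nf
                _ ≤ (1-x)^r * (1-b*x)^(s+t-r) :=
                    mul_le_mul_of_nonneg_left
                      (Real.rpow_le_rpow h1x.le hbx hstr.le) (rpow_nonneg h1x.le _)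
            calc (1-b)^t / ((1-x)^r * (1-b*x)^(s+t-r)) ≤ (1-b)^t / (1-x)^(s+t) :=
                  div_le_div_of_nonneg_left (rpow_nonneg h1b.le _)
                    (rpow_pos_of_pos h1x _) hden
              _ = (1-b)^t * |1-x| ^ (-(s+t)) := by
                  rw [abs_of_pos h1x, Real.rpow_neg h1x.le, div_eq_mul_inv]
        _ = ENNReal.ofReal ((1-b)^t) *
            ∫⁻ x in Icc (0:ℝ) b, ENNReal.ofReal (|1-x| ^ (-(s+t))) ∂μ :=
            lintegral_const_mul' _ _ ENNReal.ofReal_ne_top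
        _ ≤ ENNReal.ofReal ((1-b)^t) *
            ENNReal.ofReal ((μ univ).toReal + C * ((s+t)/t) * (1-b) ^ (-t)) := by
            gcongr
            exact lemA s t C hs ht hC μ hμC b hb0 hb1
        _ = ENNReal.ofReal ((1-b)^t * ((μ univ).toReal + C * ((s+t)/t) * (1-b) ^ (-t))) := by
            rw [← ENNReal.ofReal_mul (rpow_nonneg h1b.le _)]
        _ ≤ ENNReal.ofReal ((μ univ).toReal + C * ((s+t)/t)) := by
            apply ENNReal.ofReal_le_ofReal
            have hbt1 : (1-b)^t ≤ 1 := rpow_le_one h1b.le (by linarith) ht.le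
            have hbt0 : (0:ℝ) ≤ (1-b)^t := rpow_nonneg h1b.le _
            have hid : (1-b)^t * (1-b)^(-t) = 1 := by
              rw [← Real.rpow_add h1b]; norm_num
            have hmt : (0:ℝ) ≤ (μ univ).toReal := ENNReal.toReal_nonneg
            have hK : (0:ℝ) ≤ C * ((s+t)/t) := by positivity
            calc (1-b)^t * ((μ univ).toReal + C * ((s+t)/t) * (1-b)^(-t))
                = (1-b)^t * (μ univ).toReal + C * ((s+t)/t) * ((1-b)^t * (1-b)^(-t)) := by
                  ring
              _ = (1-b)^t * (μ univ).toReal + C * ((s+t)/t) := by rw [hid, mul_one]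
              _ ≤ (μ univ).toReal + C * ((s+t)/t) := by nlinarith
    have pieceB : ∫⁻ x in Ioo b 1,
        ENNReal.ofReal ((1 - b) ^ t / ((1 - x) ^ r * (1 - b * x) ^ (s + t - r))) ∂μ
        ≤ ENNReal.ofReal (C * (1 + r/(s-r))) := by
      calc ∫⁻ x in Ioo b 1,
          ENNReal.ofReal ((1 - b) ^ t / ((1 - x) ^ r * (1 - b * x) ^ (s + t - r))) ∂μ
          ≤ ∫⁻ x in Ioo b 1,
            ENNReal.ofReal ((1-b)^(r-s)) * ENNReal.ofReal (|1-x| ^ (-r)) ∂μ := by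
            apply setLIntegral_mono' measurableSet_Ioo
            intro x hx
            rw [← ENNReal.ofReal_mul (rpow_nonneg h1b.le _)]
            apply ENNReal.ofReal_le_ofReal
            obtain ⟨hbx, hx1⟩ := hx
            have hx0 : (0:ℝ) ≤ x := le_trans hb0 hbx.le
            have h1x : (0:ℝ) < 1 - x := by linarith
            have hbbx : 1 - b ≤ 1 - b * x := by nlinarith
            have hden : (1-x)^r * (1-b)^(s+t-r) ≤ (1-x)^r * (1-b*x)^(s+t-r) :=
              mul_le_mul_of_nonneg_left
                (Real.rpow_le_rpow h1b.le hbbx hstr.le) (rpow_nonneg h1x.le _)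
            calc (1-b)^t / ((1-x)^r * (1-b*x)^(s+t-r))
                ≤ (1-b)^t / ((1-x)^r * (1-b)^(s+t-r)) :=
                  div_le_div_of_nonneg_left (rpow_nonneg h1b.le _) (by positivity) hden
              _ = (1-b)^(r-s) * |1-x| ^ (-r) := by
                  have hexp : (1-b)^(r-s) = (1-b)^t / (1-b)^(s+t-r) := by
                    rw [← Real.rpow_sub h1b]
                    congr 1
                    ring
                  rw [abs_of_pos h1x, Real.rpow_neg h1x.le, hexp]
                  ring
        _ = ENNReal.ofReal ((1-b)^(r-s)) *
            ∫⁻ x in Ioo b 1, ENNReal.ofReal (|1-x| ^ (-r)) ∂μ :=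
            lintegral_const_mul' _ _ ENNReal.ofReal_ne_top
        _ ≤ ENNReal.ofReal ((1-b)^(r-s)) *
            ENNReal.ofReal (C * (1 + r/(s-r)) * (1-b) ^ (s-r)) := by
            gcongr
            exact lemB s r C hs hr0 hrs hC μ hμC b hb0 hb1
        _ = ENNReal.ofReal (C * (1 + r/(s-r))) := by
            rw [← ENNReal.ofReal_mul (rpow_nonneg h1b.le _)]
            congr 1
            have hone : (1-b)^(r-s) * (1-b)^(s-r) = 1 := by
              rw [← Real.rpow_add h1b]; norm_num
            calc (1-b)^(r-s) * (C * (1 + r/(s-r)) * (1-b)^(s-r))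
                = C * (1 + r/(s-r)) * ((1-b)^(r-s) * (1-b)^(s-r)) := by ring
              _ = C * (1 + r/(s-r)) := by rw [hone, mul_one]
    refine le_trans (add_le_add pieceA pieceB) ?_
    rw [← ENNReal.ofReal_add (by positivity) (by positivity)]
  tfae_have 2 → 3 := by
    rintro ⟨M, hM⟩
    refine ⟨M, fun a ha => le_trans ?_ (hM a ha)⟩
    apply setLIntegral_mono' measurableSet_Ico
    intro x hx
    obtain ⟨hx0, hx1⟩ := hx
    have hb1 : ‖a‖ < 1 := mem_ball_zero_iff.1 ha
    have hb0 : (0:ℝ) ≤ ‖a‖ := norm_nonneg a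
    have hax : ‖a‖ * x < 1 := lt_of_le_of_lt (mul_le_of_le_one_left hx0 hb1.le) hx1
    have h1ax : (0:ℝ) < 1 - ‖a‖ * x := by linarith
    have h1x : (0:ℝ) < 1 - x := by linarith
    apply ENNReal.ofReal_le_ofReal
    have habs : 1 - ‖a‖ * x ≤ ‖1 - a * (x:ℂ)‖ := by
      have h1 := norm_sub_norm_le (1 : ℂ) (a * (x:ℂ))
      rw [norm_one, norm_mul, Complex.norm_real, Real.norm_eq_abs, abs_of_nonneg hx0] at h1
      linarith
    have hden : (1-x)^r * (1 - ‖a‖*x)^(s+t-r)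
        ≤ (1-x)^r * ‖1 - a * (x:ℂ)‖^(s+t-r) :=
      mul_le_mul_of_nonneg_left (Real.rpow_le_rpow h1ax.le habs hstr.le)
        (rpow_nonneg h1x.le _)
    exact div_le_div_of_nonneg_left
      (rpow_nonneg (by linarith : (0:ℝ) ≤ 1 - ‖a‖) _) (by positivity) hden
  tfae_have 3 → 1 := by
    rintro ⟨M, hM⟩
    refine ⟨2 ^ (s+t-r) * max M 1, by positivity, ?_⟩
    intro x0 hx0mem
    obtain ⟨hx00, hx01⟩ := hx0mem
    have h1x0 : (0:ℝ) < 1 - x0 := by linarith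
    have hmem : (x0:ℂ) ∈ Metric.ball (0:ℂ) 1 := by
      rw [mem_ball_zero_iff, Complex.norm_real, Real.norm_eq_abs, abs_of_nonneg hx00]; exact hx01
    have hnorm : ‖(x0:ℂ)‖ = x0 := by rw [Complex.norm_real, Real.norm_eq_abs, abs_of_nonneg hx00]
    set c : ℝ := (1-x0)^t / ((1-x0)^r * (2*(1-x0))^(s+t-r)) with hc
    have hc0 : 0 < c := by positivity
    have key : ENNReal.ofReal c * μ (Ico x0 1) ≤ ENNReal.ofReal M := by
      calc ENNReal.ofReal c * μ (Ico x0 1) = ∫⁻ _ in Ico x0 1, ENNReal.ofReal c ∂μ :=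
            (setLIntegral_const _ _).symm
        _ ≤ ∫⁻ x in Ico x0 1, ENNReal.ofReal ((1 - ‖(x0:ℂ)‖) ^ t /
              ((1 - x) ^ r * ‖1 - (x0:ℂ) * (x:ℂ)‖ ^ (s + t - r))) ∂μ := by
            apply setLIntegral_mono' measurableSet_Ico
            intro x hx
            obtain ⟨hxx0, hx1⟩ := hx
            have hx0 : (0:ℝ) ≤ x := le_trans hx00 hxx0
            have h1x : (0:ℝ) < 1 - x := by linarith
            apply ENNReal.ofReal_le_ofReal
            rw [hnorm]
            have habs : ‖1 - (x0:ℂ)*(x:ℂ)‖ = 1 - x0*x := by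
              rw [show (1:ℂ) - (x0:ℂ)*(x:ℂ) = ((1 - x0*x : ℝ) : ℂ) by push_cast; ring,
                Complex.norm_real, Real.norm_eq_abs, abs_of_pos (by nlinarith)]
            rw [habs]
            have h0x0x : (0:ℝ) < 1 - x0*x := by nlinarith
            have hd1 : (1-x)^r ≤ (1-x0)^r := Real.rpow_le_rpow h1x.le (by linarith) hr0
            have hd2 : (1 - x0*x) ^ (s+t-r) ≤ (2*(1-x0)) ^ (s+t-r) :=
              Real.rpow_le_rpow h0x0x.le (by nlinarith) hstr.le
            have hden : (1-x)^r * (1-x0*x)^(s+t-r) ≤ (1-x0)^r * (2*(1-x0))^(s+t-r) :=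
              mul_le_mul hd1 hd2 (rpow_nonneg h0x0x.le _) (rpow_nonneg h1x0.le _)
            rw [hc]
            have hp : (0:ℝ) < (1-x)^r * (1-x0*x)^(s+t-r) := by positivity
            exact div_le_div_of_nonneg_left (rpow_nonneg h1x0.le _) hp hden
        _ ≤ ∫⁻ x in Ico (0:ℝ) 1, ENNReal.ofReal ((1 - ‖(x0:ℂ)‖) ^ t /
              ((1 - x) ^ r * ‖1 - (x0:ℂ) * (x:ℂ)‖ ^ (s + t - r))) ∂μ :=
            lintegral_mono_set (fun x hx => ⟨le_trans hx00 hx.1, hx.2⟩)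
        _ ≤ ENNReal.ofReal M := hM _ hmem
    have hμx : μ (Ico x0 1) ≤ ENNReal.ofReal (max M 1) / ENNReal.ofReal c := by
      rw [ENNReal.le_div_iff_mul_le (Or.inl (ENNReal.ofReal_pos.2 hc0).ne')
        (Or.inl ENNReal.ofReal_ne_top)]
      calc μ (Ico x0 1) * ENNReal.ofReal c = ENNReal.ofReal c * μ (Ico x0 1) := mul_comm _ _
        _ ≤ ENNReal.ofReal M := key
        _ ≤ ENNReal.ofReal (max M 1) := ENNReal.ofReal_le_ofReal (le_max_left _ _)
    refine le_trans hμx ?_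
    rw [← ENNReal.ofReal_div_of_pos hc0]
    apply ENNReal.ofReal_le_ofReal
    apply le_of_eq
    rw [hc]
    have e1 : (2*(1-x0))^(s+t-r) = 2^(s+t-r) * (1-x0)^(s+t-r) :=
      Real.mul_rpow (by norm_num) h1x0.le
    have e2 : (1-x0)^r * (1-x0)^(s+t-r) = (1-x0)^s * (1-x0)^t := by
      rw [← Real.rpow_add h1x0, ← Real.rpow_add h1x0]; ring_nf
    have hPt : (0:ℝ) < (1-x0)^t := rpow_pos_of_pos h1x0 _
    have hW : (0:ℝ) < (2:ℝ)^(s+t-r) := rpow_pos_of_pos two_pos _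
    rw [e1]
    field_simp
    linear_combination e2
  tfae_finish
end

section
/- For r ≥ s > 0 and t > 0, the measure dμ₁(x) = (1-x)^{s-1} dx on [0,1) is an s-Carleson measure, yet sup_{a∈𝔻} ∫_{[0,1)} (1-|a|)^t / ((1-x)^r |1-ax|^{s+t-r}) dμ₁(x) = +∞. -/
open MeasureTheory Set

private lemma key_map (x : ℝ) (g : ℝ → ENNReal) (hg : Measurable g) :
    ∫⁻ y in Ico x 1, g (1 - y) = ∫⁻ u in Ioc 0 (1 - x), g u := by
  have hmp : MeasurePreserving (fun y : ℝ => 1 - y) volume volume :=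
    Measure.measurePreserving_sub_left volume 1
  have hpre : (fun y : ℝ => 1 - y) ⁻¹' Ioc (0:ℝ) (1 - x) = Ico x 1 := by
    ext y
    simp only [Set.mem_preimage, Set.mem_Ioc, Set.mem_Ico]
    constructor <;> intro h <;> exact ⟨by linarith [h.1, h.2], by linarith [h.1, h.2]⟩
  calc ∫⁻ y in Ico x 1, g (1 - y) ∂volume
      = ∫⁻ y in (fun y : ℝ => 1 - y) ⁻¹' Ioc (0:ℝ) (1 - x), g (1 - y) ∂volume := by rw [hpre]
    _ = ∫⁻ u in Ioc (0:ℝ) (1 - x), g u ∂(Measure.map (fun y : ℝ => 1 - y) volume) :=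
        (setLIntegral_map measurableSet_Ioc hg hmp.measurable).symm
    _ = _ := by rw [hmp.map_eq]

theorem stmt_4 (s t r : ℝ) (hs : 0 < s) (ht : 0 < t) (hrs : s ≤ r) :
    (∃ C : ℝ, 0 < C ∧ ∀ x ∈ Ico (0:ℝ) 1,
        ((volume.restrict (Ico (0:ℝ) 1)).withDensity
          (fun x => ENNReal.ofReal ((1 - x) ^ (s - 1)))) (Ico x 1)
          ≤ ENNReal.ofReal (C * (1 - x) ^ s)) ∧
    (⨆ a : Metric.ball (0:ℂ) 1,
      ∫⁻ x in Ico (0:ℝ) 1,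
        ENNReal.ofReal ((1 - ‖(a:ℂ)‖) ^ t /
          ((1 - x) ^ r * ‖1 - (a:ℂ) * (x:ℂ)‖ ^ (s + t - r)))
        ∂((volume.restrict (Ico (0:ℝ) 1)).withDensity
            (fun x => ENNReal.ofReal ((1 - x) ^ (s - 1))))) = ⊤ := by
  have hg : Measurable (fun x : ℝ => ENNReal.ofReal ((1 - x) ^ (s - 1))) := by
    fun_prop
  constructor
  · -- Carleson part
    refine ⟨1/s, by positivity, fun x hx => ?_⟩
    have hx0 : (0:ℝ) ≤ x := hx.1
    have hx1 : x < 1 := hx.2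
    have hb : (0:ℝ) < 1 - x := by linarith
    have h1 : ((volume.restrict (Ico (0:ℝ) 1)).withDensity
          (fun x => ENNReal.ofReal ((1 - x) ^ (s - 1)))) (Ico x 1)
        = ∫⁻ y in Ico x 1, ENNReal.ofReal ((1 - y) ^ (s - 1)) ∂volume := by
      rw [withDensity_apply _ measurableSet_Ico, Measure.restrict_restrict measurableSet_Ico,
        Set.inter_eq_left.mpr (Ico_subset_Ico hx0 le_rfl)]
    have h2 : ∫⁻ y in Ico x 1, ENNReal.ofReal ((1 - y) ^ (s - 1)) ∂volume
        = ∫⁻ u in Ioc 0 (1 - x), ENNReal.ofReal (u ^ (s - 1)) ∂volume :=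
      key_map x (fun u => ENNReal.ofReal (u ^ (s - 1))) (by fun_prop)
    have hint : IntegrableOn (fun u : ℝ => u ^ (s - 1)) (Ioc 0 (1 - x)) volume := by
      have := intervalIntegral.intervalIntegrable_rpow' (a := 0) (b := 1 - x) (r := s - 1) (by linarith)
      rwa [intervalIntegrable_iff, uIoc_of_le hb.le] at this
    have h3 : ∫⁻ u in Ioc 0 (1 - x), ENNReal.ofReal (u ^ (s - 1)) ∂volume
        = ENNReal.ofReal (∫ u in Ioc 0 (1 - x), u ^ (s - 1) ∂volume) := by
      rw [← ofReal_integral_eq_lintegral_ofReal hint]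
      filter_upwards [ae_restrict_mem measurableSet_Ioc] with u hu
      exact Real.rpow_nonneg hu.1.le _
    have h4 : ∫ u in Ioc 0 (1 - x), u ^ (s - 1) ∂volume = (1 - x) ^ s / s := by
      rw [← intervalIntegral.integral_of_le hb.le,
        integral_rpow (Or.inl (by linarith : (-1:ℝ) < s - 1))]
      rw [sub_add_cancel, Real.zero_rpow hs.ne', sub_zero]
    rw [h1, h2, h3, h4, one_div, inv_mul_eq_div]
  · -- supremum is infinite
    set ν := (volume.restrict (Ico (0:ℝ) 1)).withDensity
        (fun x => ENNReal.ofReal ((1 - x) ^ (s - 1))) with hν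
    have ha0 : (0:ℂ) ∈ Metric.ball (0:ℂ) 1 := Metric.mem_ball_self one_pos
    apply top_unique
    refine le_trans ?_ (le_iSup _ (⟨0, ha0⟩ : Metric.ball (0:ℂ) 1))
    have hsimp : ∀ x : ℝ, ENNReal.ofReal ((1 - ‖((0:ℂ))‖) ^ t /
          ((1 - x) ^ r * (‖1 - (0:ℂ) * (x:ℂ)‖) ^ (s + t - r)))
        = ENNReal.ofReal (1 / (1 - x) ^ r) := by
      intro x
      simp [Real.one_rpow]
    have hrestr : ν.restrict (Ico (0:ℝ) 1) = ν := by
      rw [hν, restrict_withDensity measurableSet_Ico,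
        Measure.restrict_restrict measurableSet_Ico, Set.inter_self]
    have hf : Measurable (fun x : ℝ => ENNReal.ofReal (1 / (1 - x) ^ r)) := by fun_prop
    have key : ∫⁻ x in Ico (0:ℝ) 1, ENNReal.ofReal (1 / (1 - x) ^ r) ∂ν = ⊤ := by
      have e1 : ∫⁻ x in Ico (0:ℝ) 1, ENNReal.ofReal (1 / (1 - x) ^ r) ∂ν
          = ∫⁻ x, (fun x : ℝ => ENNReal.ofReal ((1 - x) ^ (s - 1))) x *
              ENNReal.ofReal (1 / (1 - x) ^ r) ∂(volume.restrict (Ico (0:ℝ) 1)) := by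
        conv_lhs => rw [show ∫⁻ x in Ico (0:ℝ) 1, ENNReal.ofReal (1 / (1 - x) ^ r) ∂ν
            = ∫⁻ x, ENNReal.ofReal (1 / (1 - x) ^ r) ∂(ν.restrict (Ico (0:ℝ) 1)) from rfl,
          hrestr, hν]
        exact lintegral_withDensity_eq_lintegral_mul _ hg hf
      have e2 : ∫⁻ x, (fun x : ℝ => ENNReal.ofReal ((1 - x) ^ (s - 1))) x *
              ENNReal.ofReal (1 / (1 - x) ^ r) ∂(volume.restrict (Ico (0:ℝ) 1))
          = ∫⁻ x in Ico (0:ℝ) 1, ENNReal.ofReal ((1 - x) ^ (s - 1 - r)) ∂volume := by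
        apply setLIntegral_congr_fun measurableSet_Ico
        intro x hx
        beta_reduce
        have h1x : (0:ℝ) < 1 - x := by linarith [hx.2]
        rw [← ENNReal.ofReal_mul (Real.rpow_nonneg h1x.le _), mul_one_div,
          ← Real.rpow_sub h1x]
      have e3 : ∫⁻ x in Ico (0:ℝ) 1, ENNReal.ofReal ((1 - x) ^ (s - 1 - r)) ∂volume
          = ∫⁻ u in Ioc (0:ℝ) 1, ENNReal.ofReal (u ^ (s - 1 - r)) ∂volume := by
        simpa using key_map 0 (fun u => ENNReal.ofReal (u ^ (s - 1 - r))) (by fun_prop)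
      rw [e1, e2, e3]
      by_contra h
      have hInt : Integrable (fun u : ℝ => u ^ (s - 1 - r))
          (volume.restrict (Ioc (0:ℝ) 1)) := by
        rw [← lintegral_ofReal_ne_top_iff_integrable]
        · exact h
        · exact (by fun_prop : Measurable (fun u : ℝ => u ^ (s - 1 - r))).aestronglyMeasurable
        · filter_upwards [ae_restrict_mem measurableSet_Ioc] with u hu
          exact Real.rpow_nonneg hu.1.le _
      have hIoo : IntegrableOn (fun u : ℝ => u ^ (s - 1 - r)) (Ioo (0:ℝ) 1) volume :=
        MeasureTheory.IntegrableOn.mono_set hInt Ioo_subset_Ioc_self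
      rw [intervalIntegral.integrableOn_Ioo_rpow_iff one_pos] at hIoo
      linarith
    exact le_of_eq (key.symm.trans (lintegral_congr fun x => (hsimp x).symm))
end

section
/- Let μ be a finite positive Borel measure on [0,1) and s > 0, and let μ_n = ∫_{[0,1)} t^n dμ(t) be its moments. Then μ is an s-Carleson measure if and only if sup_{n≥0} (1+n)^s μ_n < ∞. -/
open MeasureTheory Set

private lemma aux_intOn (μ : Measure ℝ) [IsFiniteMeasure μ] (n : ℕ) :
    IntegrableOn (fun x : ℝ => x ^ n) (Ico 0 1) μ := by
  apply Measure.integrableOn_of_bounded (M := 1) (measure_ne_top μ _)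
    (Continuous.aestronglyMeasurable (continuous_pow n))
  rw [ae_restrict_iff' measurableSet_Ico]
  refine Filter.Eventually.of_forall fun a ha => ?_
  rw [Real.norm_eq_abs, abs_pow, abs_of_nonneg ha.1]
  exact pow_le_one₀ ha.1 ha.2.le

private lemma aux_nonneg (μ : Measure ℝ) (n : ℕ) :
    0 ≤ᵐ[μ.restrict (Ico 0 1)] fun x : ℝ => x ^ n := by
  filter_upwards [ae_restrict_mem measurableSet_Ico] with a ha using pow_nonneg ha.1 n

section
open intervalIntegral

private lemma aux_rpow_int : (∫ t in Ioo (0:ℝ) 1, t ^ (-(2⁻¹:ℝ))) = 2 := by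
  rw [← integral_Ioc_eq_integral_Ioo, ← integral_of_le (by norm_num : (0:ℝ) ≤ 1),
    integral_rpow (Or.inl (by norm_num : (-1:ℝ) < -(2⁻¹:ℝ))),
    Real.one_rpow, Real.zero_rpow (by norm_num : -(2⁻¹:ℝ) + 1 ≠ 0)]
  norm_num

end

set_option maxHeartbeats 1000000 in
theorem stmt_5 (s : ℝ) (hs : 0 < s) (μ : Measure ℝ) [IsFiniteMeasure μ] :
    (∃ C : ℝ, 0 < C ∧ ∀ x ∈ Ico (0:ℝ) 1, μ (Ico x 1) ≤ ENNReal.ofReal (C * (1 - x) ^ s)) ↔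
    (∃ M : ℝ, ∀ n : ℕ, (1 + n : ℝ) ^ s * (∫ x in Ico (0:ℝ) 1, x ^ n ∂μ) ≤ M) := by
  constructor
  · rintro ⟨C, hC, hCar⟩
    refine ⟨max ((μ Set.univ).toReal) (2 * C * (2 * s) ^ s * 2 ^ s), fun n => ?_⟩
    rcases Nat.eq_zero_or_pos n with hn | hn
    · subst hn
      simp only [Nat.cast_zero, add_zero, pow_zero, Real.one_rpow, one_mul]
      refine le_trans ?_ (le_max_left _ _)
      simp only [integral_const, smul_eq_mul, mul_one]
      rw [measureReal_def, Measure.restrict_apply_univ]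
      exact ENNReal.toReal_mono (measure_ne_top μ _) (measure_mono (subset_univ _))
    · have npos : (0:ℝ) < n := Nat.cast_pos.mpr hn
      set K : ℝ := C * (2 * s) ^ s * (((n:ℝ)) ^ s)⁻¹ with hK
      have hKpos : 0 < K := by positivity
      have hi := aux_intOn μ n
      have key : ∫ x in Ico (0:ℝ) 1, x ^ n ∂μ
          = ∫ t in Ioi (0:ℝ), ((μ.restrict (Ico 0 1)) {a : ℝ | t < a ^ n}).toReal :=
        hi.integral_eq_integral_meas_lt (aux_nonneg μ n)
      set g : ℝ → ℝ := (Ioo (0:ℝ) 1).indicator (fun t => K * t ^ (-(2⁻¹:ℝ))) with hg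
      -- integrability of g
      have hint : IntegrableOn (fun t : ℝ => K * t ^ (-(2⁻¹:ℝ))) (Ioo 0 1) volume := by
        apply Integrable.const_mul
        have h1 := (intervalIntegral.intervalIntegrable_rpow' (show (-1:ℝ) < -(2⁻¹:ℝ) by norm_num)
          (a := (0:ℝ)) (b := 1))
        rw [intervalIntegrable_iff_integrableOn_Ioc_of_le (by norm_num)] at h1
        exact h1.mono_set Ioo_subset_Ioc_self
      have hgint : Integrable g volume := hint.integrable_indicator measurableSet_Ioo
      -- pointwise bound
      have hFg : ∀ t ∈ Ioi (0:ℝ),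
          ((μ.restrict (Ico 0 1)) {a : ℝ | t < a ^ n}).toReal ≤ g t := by
        intro t ht
        rw [mem_Ioi] at ht
        have hms : MeasurableSet {a : ℝ | t < a ^ n} :=
          measurableSet_lt measurable_const ((measurable_id.pow_const n))
        rw [Measure.restrict_apply hms]
        rcases lt_or_ge t 1 with ht1 | ht1
        · -- main case
          set b : ℝ := t ^ ((n:ℝ)⁻¹) with hb
          have hb0 : 0 < b := Real.rpow_pos_of_pos ht _
          have hb1 : b < 1 := Real.rpow_lt_one ht.le ht1 (by positivity)
          have hsub2 : {a : ℝ | t < a ^ n} ∩ Ico 0 1 ⊆ Ico b 1 := by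
            rintro a ⟨hta, ha⟩
            refine ⟨?_, ha.2⟩
            have hcanc : ((a ^ n : ℝ)) ^ ((n:ℝ)⁻¹) = a := by
              rw [← Real.rpow_natCast a n, ← Real.rpow_mul ha.1,
                mul_inv_cancel₀ (by exact_mod_cast hn.ne'), Real.rpow_one]
            calc b ≤ ((a ^ n : ℝ)) ^ ((n:ℝ)⁻¹) :=
                  Real.rpow_le_rpow ht.le (le_of_lt hta) (by positivity)
            _ = a := hcanc
          have h1b0 : (0:ℝ) ≤ 1 - b := by linarith
          have hF : (μ ({a : ℝ | t < a ^ n} ∩ Ico 0 1)).toReal ≤ C * (1 - b) ^ s := by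
            apply ENNReal.toReal_le_of_le_ofReal
              (mul_nonneg hC.le (Real.rpow_nonneg h1b0 s))
            exact le_trans (measure_mono hsub2) (hCar b ⟨hb0.le, hb1⟩)
          have hlog1 : 1 - b ≤ (n:ℝ)⁻¹ * ((2 * s) * t ^ (-(2 * s)⁻¹)) := by
            have h2 : Real.log b ≤ b - 1 := Real.log_le_sub_one_of_pos hb0
            have h3 : Real.log b = (n:ℝ)⁻¹ * Real.log t := Real.log_rpow ht _
            have h4 : -Real.log t ≤ (2 * s) * t ^ (-(2 * s)⁻¹) := by
              have h5 : Real.log t⁻¹ ≤ (t⁻¹) ^ ((2 * s)⁻¹) / (2 * s)⁻¹ :=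
                Real.log_le_rpow_div (by positivity) (by positivity)
              rw [Real.log_inv, Real.inv_rpow ht.le, ← Real.rpow_neg ht.le] at h5
              have h5' : t ^ (-(2 * s)⁻¹) / (2 * s)⁻¹ = 2 * s * t ^ (-(2 * s)⁻¹) := by
                field_simp
              linarith [h5' ▸ h5]
            nlinarith [mul_le_mul_of_nonneg_left h4 (by positivity : (0:ℝ) ≤ (n:ℝ)⁻¹)]
          have hrpow : (1 - b) ^ s ≤ (((n:ℝ))^s)⁻¹ * ((2*s) ^ s * t ^ (-(2⁻¹:ℝ))) := by
            have h6 : ((n:ℝ)⁻¹ * ((2 * s) * t ^ (-(2 * s)⁻¹))) ^ s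
                = ((n:ℝ)⁻¹) ^ s * ((2*s) ^ s * (t ^ (-(2 * s)⁻¹)) ^ s) := by
              rw [Real.mul_rpow (by positivity) (by positivity),
                Real.mul_rpow (by positivity) (Real.rpow_nonneg ht.le _)]
            have h7 : (t ^ (-(2 * s)⁻¹ : ℝ)) ^ s = t ^ (-(2⁻¹:ℝ)) := by
              rw [← Real.rpow_mul ht.le]
              congr 1
              field_simp
            have h8 : ((n:ℝ)⁻¹) ^ s = (((n:ℝ))^s)⁻¹ := Real.inv_rpow (le_of_lt npos) s
            calc (1 - b) ^ s ≤ ((n:ℝ)⁻¹ * ((2 * s) * t ^ (-(2 * s)⁻¹))) ^ s :=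
                  Real.rpow_le_rpow h1b0 hlog1 hs.le
            _ = (((n:ℝ))^s)⁻¹ * ((2*s) ^ s * t ^ (-(2⁻¹:ℝ))) := by rw [h6, h7, h8]
          have hgt : g t = K * t ^ (-(2⁻¹:ℝ)) :=
            Set.indicator_of_mem (show t ∈ Ioo (0:ℝ) 1 from ⟨ht, ht1⟩) _
          rw [hgt, hK]
          calc (μ ({a : ℝ | t < a ^ n} ∩ Ico 0 1)).toReal ≤ C * (1 - b) ^ s := hF
          _ ≤ C * ((((n:ℝ))^s)⁻¹ * ((2*s) ^ s * t ^ (-(2⁻¹:ℝ)))) :=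
                mul_le_mul_of_nonneg_left hrpow hC.le
          _ = C * (2 * s) ^ s * (((n:ℝ)) ^ s)⁻¹ * t ^ (-(2⁻¹:ℝ)) := by ring
        · -- t ≥ 1 : the set is empty
          have hempty : {a : ℝ | t < a ^ n} ∩ Ico 0 1 = ∅ := by
            rw [eq_empty_iff_forall_notMem]
            rintro a ⟨hta, ha⟩
            have : a ^ n < 1 := pow_lt_one₀ ha.1 ha.2 hn.ne'
            simp only [mem_setOf_eq] at hta
            linarith
          have hgt : g t = 0 := indicator_of_notMem (by simp [ht1.not_gt]) _
          rw [hempty, hgt, measure_empty]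
          simp
      -- integral comparison
      have hle : (∫ t in Ioi (0:ℝ), ((μ.restrict (Ico 0 1)) {a : ℝ | t < a ^ n}).toReal)
          ≤ ∫ t in Ioi (0:ℝ), g t := by
        apply integral_mono_of_nonneg
          (Filter.Eventually.of_forall fun t => ENNReal.toReal_nonneg) hgint.integrableOn
        filter_upwards [ae_restrict_mem measurableSet_Ioi] with t ht using hFg t ht
      have hgval : (∫ t in Ioi (0:ℝ), g t) = K * 2 := by
        rw [hg, setIntegral_indicator measurableSet_Ioo,
          inter_eq_right.mpr Ioo_subset_Ioi_self, integral_const_mul, aux_rpow_int]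
      have hμn : (∫ x in Ico (0:ℝ) 1, x ^ n ∂μ) ≤ K * 2 := by
        rw [key]; exact hgval ▸ hle
      have h2s' : (1 + (n:ℝ)) ^ s * (((n:ℝ))^s)⁻¹ ≤ 2 ^ s := by
        rw [mul_inv_le_iff₀ (Real.rpow_pos_of_pos npos s)]
        calc (1 + (n:ℝ)) ^ s ≤ (2 * (n:ℝ)) ^ s := by
              apply Real.rpow_le_rpow (by positivity) ?_ hs.le
              have : (1:ℝ) ≤ (n:ℝ) := by exact_mod_cast hn
              linarith
        _ = 2 ^ s * ((n:ℝ)) ^ s := Real.mul_rpow (by norm_num) (le_of_lt npos)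
      refine le_trans ?_ (le_max_right _ _)
      calc (1 + (n:ℝ)) ^ s * ∫ x in Ico (0:ℝ) 1, x ^ n ∂μ
          ≤ (1 + (n:ℝ)) ^ s * (K * 2) :=
            mul_le_mul_of_nonneg_left hμn (Real.rpow_nonneg (by positivity) s)
      _ = 2 * C * (2 * s) ^ s * ((1 + (n:ℝ)) ^ s * (((n:ℝ))^s)⁻¹) := by rw [hK]; ring
      _ ≤ 2 * C * (2 * s) ^ s * 2 ^ s :=
            mul_le_mul_of_nonneg_left h2s' (by positivity)
  · rintro ⟨M, hM⟩
    have hM0 : 0 ≤ M := by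
      have h0 := hM 0
      simp only [Nat.cast_zero, add_zero, pow_zero, Real.one_rpow, one_mul] at h0
      refine le_trans ?_ h0
      simp only [integral_const, smul_eq_mul, mul_one]
      positivity
    have hμu : 0 ≤ (μ Set.univ).toReal := ENNReal.toReal_nonneg
    refine ⟨2 ^ s * ((μ Set.univ).toReal + 1) + 8 * M, by positivity, fun x hx => ?_⟩
    have hx0 : (0:ℝ) ≤ x := hx.1
    have hx1 : x < 1 := hx.2
    have h1x : (0:ℝ) < 1 - x := by linarith
    have hBpos : (0:ℝ) < (1 - x) ^ s := Real.rpow_pos_of_pos h1x s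
    have hkey : (μ (Ico x 1)).toReal ≤ (2 ^ s * ((μ Set.univ).toReal + 1) + 8 * M) * (1 - x) ^ s := by
      rcases lt_or_ge x 2⁻¹ with hx2 | hx2
      · -- easy case
        have h2 : (2:ℝ)⁻¹ ≤ 1 - x := by linarith
        have h3 : ((2:ℝ)⁻¹) ^ s ≤ (1 - x) ^ s := Real.rpow_le_rpow (by norm_num) h2 hs.le
        have h4 : (2:ℝ) ^ s * ((2:ℝ)⁻¹) ^ s = 1 := by
          rw [← Real.mul_rpow (by norm_num) (by norm_num)]
          norm_num
        have h5 : (1:ℝ) ≤ 2 ^ s * (1 - x) ^ s := by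
          calc (1:ℝ) = 2 ^ s * ((2:ℝ)⁻¹) ^ s := h4.symm
          _ ≤ 2 ^ s * (1 - x) ^ s := by
            apply mul_le_mul_of_nonneg_left h3 (Real.rpow_nonneg (by norm_num) s)
        have h6 : (μ (Ico x 1)).toReal ≤ (μ Set.univ).toReal :=
          ENNReal.toReal_mono (measure_ne_top μ _) (measure_mono (subset_univ _))
        nlinarith [Real.rpow_nonneg (show (0:ℝ) ≤ 2 by norm_num) s, hBpos]
      · -- main case
        set n : ℕ := ⌊(1 - x)⁻¹⌋₊ with hn
        have hy2 : (2:ℝ) ≤ (1 - x)⁻¹ := by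
          rw [le_inv_comm₀ (by norm_num) h1x]
          linarith
        have hny : (n:ℝ) ≤ (1 - x)⁻¹ := Nat.floor_le (by positivity)
        have hyn : (1 - x)⁻¹ < n + 1 := Nat.lt_floor_add_one _
        have hn1x : (n:ℝ) * (1 - x) ≤ 1 := by
          calc (n:ℝ) * (1 - x) ≤ (1 - x)⁻¹ * (1 - x) := by
                apply mul_le_mul_of_nonneg_right hny h1x.le
          _ = 1 := inv_mul_cancel₀ h1x.ne'
        have hxpos : (0:ℝ) < x := lt_of_lt_of_le (by norm_num) hx2
        -- x ^ n ≥ 1/8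
        have hlog : -(2 * (1 - x)) ≤ Real.log x := by
          have h7 : Real.log x⁻¹ ≤ x⁻¹ - 1 := Real.log_le_sub_one_of_pos (by positivity)
          rw [Real.log_inv] at h7
          have h8 : x⁻¹ - 1 ≤ 2 * (1 - x) := by
            rw [sub_le_iff_le_add, inv_le_iff_one_le_mul₀ hxpos]
            nlinarith
          linarith
        have hxn : (8:ℝ)⁻¹ ≤ x ^ n := by
          have h9 : Real.exp (-2) ≤ x ^ n := by
            have : x ^ n = Real.exp ((n:ℝ) * Real.log x) := by
              rw [← Real.log_pow, Real.exp_log (pow_pos hxpos n)]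
            rw [this]
            apply Real.exp_le_exp.mpr
            nlinarith
          refine le_trans ?_ h9
          have h82 : Real.exp 2 ≤ 8 := by
            have := Real.exp_one_lt_d9
            calc Real.exp 2 = Real.exp 1 * Real.exp 1 := by
                  rw [← Real.exp_add]; norm_num
            _ ≤ 8 := by nlinarith [Real.exp_pos 1]
          rw [Real.exp_neg]
          exact inv_anti₀ (Real.exp_pos 2) h82
        -- integral bounds
        have hi := aux_intOn μ n
        have hsub : Ico x 1 ⊆ Ico (0:ℝ) 1 := Ico_subset_Ico hx0 le_rfl
        have hge : x ^ n * (μ (Ico x 1)).toReal ≤ ∫ t in Ico x 1, t ^ n ∂μ := by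
          have h := setIntegral_ge_of_const_le measurableSet_Ico (measure_ne_top μ _)
            (fun t ht => pow_le_pow_left₀ hx0 ht.1 n) (hi.mono_set hsub)
          rw [smul_eq_mul, measureReal_def, mul_comm] at h
          exact h
        have hmono : ∫ t in Ico x 1, t ^ n ∂μ ≤ ∫ t in Ico (0:ℝ) 1, t ^ n ∂μ :=
          setIntegral_mono_set hi (aux_nonneg μ n) (HasSubset.Subset.eventuallyLE hsub)
        have hMn := hM n
        have hP : 0 ≤ (μ (Ico x 1)).toReal := ENNReal.toReal_nonneg
        have hA : ((1 - x) ^ s)⁻¹ ≤ (1 + n:ℝ) ^ s := by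
          rw [← Real.inv_rpow h1x.le]
          apply Real.rpow_le_rpow (by positivity) (by linarith) hs.le
        have hApos : (0:ℝ) < ((1 - x) ^ s)⁻¹ := by positivity
        have hchain : ((1 - x) ^ s)⁻¹ * (8⁻¹ * (μ (Ico x 1)).toReal) ≤ M := by
          calc ((1 - x) ^ s)⁻¹ * (8⁻¹ * (μ (Ico x 1)).toReal)
              ≤ (1 + n:ℝ) ^ s * (x ^ n * (μ (Ico x 1)).toReal) := by
                apply mul_le_mul hA (by nlinarith) (by positivity) (by positivity)
          _ ≤ (1 + n:ℝ) ^ s * ∫ t in Ico (0:ℝ) 1, t ^ n ∂μ := by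
                apply mul_le_mul_of_nonneg_left (le_trans hge hmono) (by positivity)
          _ ≤ M := hMn
        have h10 : (μ (Ico x 1)).toReal ≤ 8 * M * (1 - x) ^ s := by
          rw [inv_mul_le_iff₀ hBpos] at hchain
          nlinarith
        nlinarith [mul_pos (show (0:ℝ) < 2 ^ s * ((μ Set.univ).toReal + 1) by positivity) hBpos]
    calc μ (Ico x 1) = ENNReal.ofReal (μ (Ico x 1)).toReal :=
          (ENNReal.ofReal_toReal (measure_ne_top μ _)).symm
    _ ≤ _ := ENNReal.ofReal_le_ofReal hkey
end

section
/- Suppose s > 0 and μ is a finite positive Borel measure on [0,1) with moments μ_n. If the function f_{μ,s}(z) = Σ_n (Γ(n+s)/(Γ(s)n!)) μ_n z^n belongs to the Bloch space (i.e., sup_{z∈𝔻} (1-|z|^2)|f_{μ,s}'(z)| < ∞), then μ is an s-Carleson measure. -/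
open MeasureTheory Set

theorem gamma_lb_01 {s : ℝ} (hs : 0 < s) (hs1 : s ≤ 1) :
    ∀ n : ℕ, 1 ≤ n → s * (Real.Gamma s * (Nat.factorial n : ℝ) * (n : ℝ) ^ (s - 1))
      ≤ Real.Gamma ((n : ℝ) + s) := by
  intro n hn
  induction n with
  | zero => omega
  | succ m ih =>
    rcases Nat.eq_zero_or_pos m with hm | hm
    · subst hm
      norm_num
      rw [add_comm, Real.Gamma_add_one hs.ne']
    · have IH := ih hm
      have hmp : (0:ℝ) < (m:ℝ) := by exact_mod_cast hm
      have amgm : ((m:ℝ)+1) ^ s * (m:ℝ) ^ (1-s) ≤ s * ((m:ℝ)+1) + (1-s) * m :=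
        Real.geom_mean_le_arith_mean2_weighted hs.le (by linarith) (by positivity) hmp.le
          (by ring)
      have key : ((m:ℝ)+1) ^ s ≤ ((m:ℝ)+s) * (m:ℝ) ^ (s-1) := by
        have h1 : ((m:ℝ)+1) ^ s * (m:ℝ) ^ (1-s) ≤ (m:ℝ) + s := by nlinarith [amgm]
        have h2 := mul_le_mul_of_nonneg_right h1
          (le_of_lt (Real.rpow_pos_of_pos hmp (s-1)))
        calc ((m:ℝ)+1) ^ s = ((m:ℝ)+1) ^ s * ((m:ℝ) ^ (1-s) * (m:ℝ) ^ (s-1)) := by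
              rw [← Real.rpow_add hmp]; norm_num
          _ = ((m:ℝ)+1) ^ s * (m:ℝ) ^ (1-s) * (m:ℝ) ^ (s-1) := by ring
          _ ≤ ((m:ℝ)+s) * (m:ℝ) ^ (s-1) := h2
      have hΓ : Real.Gamma ((m:ℝ) + 1 + s) = ((m:ℝ)+s) * Real.Gamma ((m:ℝ)+s) := by
        rw [show (m:ℝ) + 1 + s = ((m:ℝ) + s) + 1 by ring,
          Real.Gamma_add_one (ne_of_gt (by positivity : (0:ℝ) < (m:ℝ)+s))]
      have hpow : ((m:ℝ)+1) ^ (s-1) * ((m:ℝ)+1) = ((m:ℝ)+1) ^ s := by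
        have h3 := Real.rpow_add (show (0:ℝ) < (m:ℝ)+1 by positivity) (s-1) 1
        rw [Real.rpow_one, show s-1+1 = s by ring] at h3
        exact h3.symm
      have hΓpos : 0 < Real.Gamma s := Real.Gamma_pos_of_pos hs
      push_cast [Nat.factorial_succ]
      calc s * (Real.Gamma s * (((m:ℝ)+1) * (m.factorial : ℝ)) * ((m:ℝ)+1) ^ (s-1))
          = (s * (Real.Gamma s * (m.factorial : ℝ))) * (((m:ℝ)+1) ^ (s-1) * ((m:ℝ)+1)) := by
            ring
        _ = (s * (Real.Gamma s * (m.factorial : ℝ))) * ((m:ℝ)+1) ^ s := by rw [hpow]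
        _ ≤ (s * (Real.Gamma s * (m.factorial : ℝ))) * (((m:ℝ)+s) * (m:ℝ) ^ (s-1)) := by
            apply mul_le_mul_of_nonneg_left key
            positivity
        _ = ((m:ℝ)+s) * (s * (Real.Gamma s * (m.factorial : ℝ) * (m:ℝ) ^ (s-1))) := by ring
        _ ≤ ((m:ℝ)+s) * Real.Gamma ((m:ℝ)+s) := by
            apply mul_le_mul_of_nonneg_left IH (by positivity)
        _ = Real.Gamma ((m:ℝ) + 1 + s) := hΓ.symm

theorem gamma_lb_shift {σ : ℝ} (h0 : 0 < σ) (h1 : σ ≤ 1) (m : ℕ) :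
    ∃ c : ℝ, 0 < c ∧ ∀ n : ℕ, 1 ≤ n →
      c * (Real.Gamma (σ + (m:ℝ)) * (Nat.factorial n : ℝ) * (n:ℝ) ^ (σ + (m:ℝ) - 1))
        ≤ Real.Gamma ((n:ℝ) + (σ + (m:ℝ))) := by
  induction m with
  | zero => exact ⟨σ, h0, by simpa using gamma_lb_01 h0 h1⟩
  | succ k ih =>
    obtain ⟨c, hc, H⟩ := ih
    have hσk : (0:ℝ) < σ + (k:ℝ) := by positivity
    refine ⟨c / (σ + (k:ℝ)), by positivity, fun n hn => ?_⟩
    have hnp : (0:ℝ) < (n:ℝ) := by exact_mod_cast hn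
    have hΓ : Real.Gamma (σ + ((k:ℝ)+1)) = (σ + (k:ℝ)) * Real.Gamma (σ + (k:ℝ)) := by
      rw [show σ + ((k:ℝ)+1) = (σ + (k:ℝ)) + 1 by ring, Real.Gamma_add_one hσk.ne']
    have hΓ2 : Real.Gamma ((n:ℝ) + (σ + ((k:ℝ)+1)))
        = ((n:ℝ) + (σ + (k:ℝ))) * Real.Gamma ((n:ℝ) + (σ + (k:ℝ))) := by
      rw [show (n:ℝ) + (σ + ((k:ℝ)+1)) = ((n:ℝ) + (σ + (k:ℝ))) + 1 by ring,
        Real.Gamma_add_one (ne_of_gt (by positivity : (0:ℝ) < (n:ℝ) + (σ + (k:ℝ))))]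
    have hr : (n:ℝ) ^ (σ + ((k:ℝ)+1) - 1) = (n:ℝ) ^ (σ + (k:ℝ) - 1) * (n:ℝ) := by
      rw [show σ + ((k:ℝ)+1) - 1 = (σ + (k:ℝ) - 1) + 1 by ring, Real.rpow_add hnp,
        Real.rpow_one]
    push_cast
    rw [hr, hΓ, hΓ2]
    have Hn := H n hn
    calc c / (σ + (k:ℝ)) * ((σ + (k:ℝ)) * Real.Gamma (σ + (k:ℝ)) * (n.factorial : ℝ)
          * ((n:ℝ) ^ (σ + (k:ℝ) - 1) * (n:ℝ)))
        = (n:ℝ) * (c * (Real.Gamma (σ + (k:ℝ)) * (n.factorial : ℝ) * (n:ℝ) ^ (σ + (k:ℝ) - 1))) := by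
          field_simp
      _ ≤ (n:ℝ) * Real.Gamma ((n:ℝ) + (σ + (k:ℝ))) := by
          apply mul_le_mul_of_nonneg_left Hn hnp.le
      _ ≤ ((n:ℝ) + (σ + (k:ℝ))) * Real.Gamma ((n:ℝ) + (σ + (k:ℝ))) := by
          apply mul_le_mul_of_nonneg_right (by linarith)
            (Real.Gamma_pos_of_pos (by positivity)).le

theorem gamma_lb {s : ℝ} (hs : 0 < s) : ∃ c : ℝ, 0 < c ∧ ∀ n : ℕ, 1 ≤ n →
    c * (Real.Gamma s * (Nat.factorial n : ℝ) * (n:ℝ) ^ (s-1)) ≤ Real.Gamma ((n:ℝ) + s) := by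
  set m : ℕ := ⌈s⌉₊ - 1 with hm_def
  have hceil : ⌈s⌉₊ = m + 1 := (Nat.succ_pred_eq_of_pos (Nat.ceil_pos.mpr hs)).symm
  have h1 : s ≤ (m:ℝ) + 1 := by
    have := Nat.le_ceil s
    rw [hceil] at this
    exact_mod_cast this
  have h2 : (m:ℝ) < s := by
    have := Nat.ceil_lt_add_one hs.le
    rw [hceil] at this
    push_cast at this
    linarith
  set σ : ℝ := s - m with hσ_def
  have hσ0 : 0 < σ := by simp [hσ_def]; linarith
  have hσ1 : σ ≤ 1 := by simp [hσ_def]; linarith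
  obtain ⟨c, hc, H⟩ := gamma_lb_shift hσ0 hσ1 m
  have hσm : σ + (m:ℝ) = s := by simp [hσ_def]
  rw [hσm] at H
  exact ⟨c, hc, H⟩

lemma deriv_hasSum (a : ℕ → ℝ) (ha : ∀ n, 0 ≤ a n) (f : ℂ → ℂ)
    (hf : ∀ z ∈ Metric.ball (0:ℂ) 1,
      HasSum (fun n : ℕ => ((a n : ℝ) : ℂ) * z ^ n) (f z))
    {t : ℝ} (ht0 : 0 ≤ t) (ht1 : t < 1) :
    HasSum (fun n : ℕ => ((n:ℝ)+1) * a (n+1) * t^(n+1)) (((t:ℂ) * deriv f (t:ℂ)).re) := by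
  set p : FormalMultilinearSeries ℂ ℂ ℂ :=
    FormalMultilinearSeries.ofScalars ℂ (fun n => (a n : ℂ)) with hp
  have hnorm : ∀ n, ‖p n‖ = a n := by
    intro n
    rw [hp, FormalMultilinearSeries.ofScalars_norm]
    simp [abs_of_nonneg (ha n)]
  have hrad : 1 ≤ p.radius := by
    apply ENNReal.le_of_forall_nnreal_lt
    intro r hr
    have hr1 : (r:ℝ) < 1 := by exact_mod_cast hr
    have hball : (((r:ℝ)) : ℂ) ∈ Metric.ball (0:ℂ) 1 := by
      simp only [Metric.mem_ball, dist_zero_right, Complex.norm_real, Real.norm_eq_abs,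
        abs_of_nonneg r.coe_nonneg]
      exact hr1
    have hsum := (hf _ hball).summable
    have hsum2 : Summable (fun n => a n * (r:ℝ)^n) := by
      rw [← Complex.summable_ofReal]
      convert hsum using 2 with n
      push_cast
      ring
    apply p.le_radius_of_summable_norm
    convert hsum2 using 2 with n
    rw [hnorm]
  have hps : HasFPowerSeriesOnBall f p 0 1 := by
    refine ⟨hrad, one_pos, fun {y} hy => ?_⟩
    have hy' : y ∈ Metric.ball (0:ℂ) 1 := by
      rw [EMetric.mem_ball, edist_zero_right] at hy
      rw [Metric.mem_ball, dist_zero_right]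
      rwa [← ofReal_norm, ENNReal.ofReal_lt_one] at hy
    rw [zero_add]
    have := hf y hy'
    convert this using 2 with n
    · rfl
    rw [hp, FormalMultilinearSeries.ofScalars_apply_eq, smul_eq_mul]
  have hts : (t:ℂ) ∈ Metric.eball (0:ℂ) 1 := by
    rw [EMetric.mem_ball, edist_zero_right]
    have : ‖(t:ℂ)‖ < 1 := by
      simp [Complex.norm_real, Real.norm_eq_abs, abs_of_nonneg ht0]; exact ht1
    rwa [← ofReal_norm, ENNReal.ofReal_lt_one]
  have hd := hps.fderiv
  have hsum3 := hd.hasSum hts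
  rw [zero_add] at hsum3
  have hsum4 := hsum3.mapL (ContinuousLinearMap.apply ℂ ℂ (t:ℂ))
  have hterm : ∀ n : ℕ, (ContinuousLinearMap.apply ℂ ℂ (t:ℂ)) (p.derivSeries n fun _ => (t:ℂ))
      = ((((n:ℝ)+1) * a (n+1) * t^(n+1) : ℝ) : ℂ) := by
    intro n
    rw [ContinuousLinearMap.apply_apply, FormalMultilinearSeries.derivSeries_apply_diag,
      hp, FormalMultilinearSeries.ofScalars_apply_eq]
    push_cast
    rw [nsmul_eq_mul]
    push_cast
    simp only [smul_eq_mul]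
    ring
  have hval : (ContinuousLinearMap.apply ℂ ℂ (t:ℂ)) (fderiv ℂ f (t:ℂ))
      = (t:ℂ) * deriv f (t:ℂ) := by
    rw [ContinuousLinearMap.apply_apply]
    calc (fderiv ℂ f (t:ℂ)) (t:ℂ) = (fderiv ℂ f (t:ℂ)) ((t:ℂ) • 1) := by norm_num
      _ = (t:ℂ) • (fderiv ℂ f (t:ℂ)) 1 := ContinuousLinearMap.map_smul _ _ _
      _ = (t:ℂ) * deriv f (t:ℂ) := by rw [smul_eq_mul]; rfl
  rw [funext hterm, hval] at hsum4
  have hsum5 := hsum4.mapL Complex.reCLM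
  convert hsum5 using 2 with n
  all_goals rfl

set_option maxHeartbeats 1000000 in
theorem stmt_10 (s : ℝ) (hs : 0 < s) (μ : Measure ℝ) [IsFiniteMeasure μ]
    (f : ℂ → ℂ)
    (hf : ∀ z ∈ Metric.ball (0:ℂ) 1,
      HasSum (fun n : ℕ =>
        ((Real.Gamma ((n:ℝ) + s) / (Real.Gamma s * (Nat.factorial n : ℝ)) *
            ∫ x in Ico (0:ℝ) 1, x ^ n ∂μ : ℝ) : ℂ) * z ^ n) (f z))
    (hBloch : ∃ B : ℝ, ∀ z ∈ Metric.ball (0:ℂ) 1,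
      (1 - ‖z‖ ^ 2) * ‖deriv f z‖ ≤ B) :
    ∃ C : ℝ, 0 < C ∧ ∀ x ∈ Ico (0:ℝ) 1, μ (Ico x 1) ≤ ENNReal.ofReal (C * (1 - x) ^ s) := by
  obtain ⟨B, hB⟩ := hBloch
  have hBnn : 0 ≤ B := by
    have h0 := hB 0 (by simp)
    simp at h0
    exact le_trans (norm_nonneg _) h0
  obtain ⟨c, hc, hcΓ⟩ := gamma_lb hs
  have hΓs : 0 < Real.Gamma s := Real.Gamma_pos_of_pos hs
  set a : ℕ → ℝ := fun n => Real.Gamma ((n:ℝ) + s) / (Real.Gamma s * (Nat.factorial n : ℝ)) *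
      ∫ x in Ico (0:ℝ) 1, x ^ n ∂μ with ha_def
  -- integrability of x^n on Ico 0 1
  have hint : ∀ n : ℕ, IntegrableOn (fun x : ℝ => x ^ n) (Ico (0:ℝ) 1) μ := by
    intro n
    apply Integrable.mono' (integrable_const (1:ℝ))
      ((continuous_pow n).aestronglyMeasurable)
    filter_upwards [ae_restrict_mem measurableSet_Ico] with x hx
    rw [Real.norm_eq_abs, abs_pow, abs_of_nonneg hx.1]
    exact pow_le_one₀ hx.1 hx.2.le
  have hmom_nonneg : ∀ n : ℕ, 0 ≤ ∫ x in Ico (0:ℝ) 1, x ^ n ∂μ := fun n =>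
    setIntegral_nonneg measurableSet_Ico (fun x hx => pow_nonneg hx.1 n)
  have ha : ∀ n, 0 ≤ a n := by
    intro n
    apply mul_nonneg _ (hmom_nonneg n)
    apply div_nonneg (Real.Gamma_pos_of_pos (by positivity)).le
    positivity
  -- set up constants
  set T : ℝ := (μ univ).toReal with hT_def
  have hTnn : 0 ≤ T := ENNReal.toReal_nonneg
  have h2s : (0:ℝ) < 2 ^ s := Real.rpow_pos_of_pos two_pos s
  have h2s1 : (0:ℝ) < 2 ^ (s+1) := Real.rpow_pos_of_pos two_pos (s+1)
  set C : ℝ := 2 ^ (s+1) * Real.exp 12 * B / c + T * 2 ^ s + 1 with hC_def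
  have hC1nn : 0 ≤ 2 ^ (s+1) * Real.exp 12 * B / c := by positivity
  have hCpos : 0 < C := by
    have : 0 ≤ T * 2 ^ s := by positivity
    rw [hC_def]; linarith
  refine ⟨C, hCpos, fun t ht => ?_⟩
  obtain ⟨ht0, ht1⟩ := ht
  set u : ℝ := 1 - t with hu_def
  have hu : 0 < u := by rw [hu_def]; linarith
  set M : ℝ := (μ (Ico t 1)).toReal with hM_def
  have hMnn : 0 ≤ M := ENNReal.toReal_nonneg
  have husnn : (0:ℝ) < u ^ s := Real.rpow_pos_of_pos hu s
  -- reduce to real inequality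
  suffices key : M ≤ C * u ^ s by
    rw [show μ (Ico t 1) = ENNReal.ofReal M from (ENNReal.ofReal_toReal (measure_ne_top μ _)).symm]
    exact ENNReal.ofReal_le_ofReal key
  -- moment lower bound
  have hmom_lb : ∀ n : ℕ, t ^ n * M ≤ ∫ x in Ico (0:ℝ) 1, x ^ n ∂μ := by
    intro n
    have hsub : Ico t 1 ⊆ Ico (0:ℝ) 1 := Ico_subset_Ico ht0 le_rfl
    calc t ^ n * M ≤ ∫ x in Ico t 1, x ^ n ∂μ := by
          apply setIntegral_ge_of_const_le_real measurableSet_Ico (measure_ne_top μ _)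
            (fun x hx => pow_le_pow_left₀ ht0 hx.1 n) ((hint n).mono_set hsub)
      _ ≤ ∫ x in Ico (0:ℝ) 1, x ^ n ∂μ := by
          apply setIntegral_mono_set (hint n)
          · filter_upwards [ae_restrict_mem measurableSet_Ico] with x hx
            exact pow_nonneg hx.1 n
          · exact HasSubset.Subset.eventuallyLE hsub
  rcases lt_or_ge t (1/2) with htlt | htge
  -- easy case t < 1/2
  · have hMT : M ≤ T := by
      rw [hM_def, hT_def]
      exact ENNReal.toReal_mono (measure_ne_top μ _) (measure_mono (subset_univ _))
    have h2u : (1:ℝ) ≤ 2 * u := by rw [hu_def]; linarith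
    have h1le : (1:ℝ) ≤ 2 ^ s * u ^ s := by
      rw [← Real.mul_rpow (by norm_num) hu.le]
      calc (1:ℝ) = 1 ^ s := (Real.one_rpow s).symm
        _ ≤ (2*u) ^ s := Real.rpow_le_rpow (by norm_num) h2u hs.le
    calc M ≤ T * (2 ^ s * u ^ s) := le_trans hMT (le_mul_of_one_le_right hTnn h1le)
      _ = (T * 2 ^ s) * u ^ s := by ring
      _ ≤ C * u ^ s := by
          apply mul_le_mul_of_nonneg_right _ husnn.le
          rw [hC_def]; linarith
  -- main case t ≥ 1/2
  · have hu2 : u ≤ 1/2 := by rw [hu_def]; linarith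
    have huinv : (2:ℝ) ≤ u⁻¹ := by
      rw [le_inv_comm₀ (by norm_num) hu]
      linarith
    set N : ℕ := ⌊u⁻¹⌋₊ with hN_def
    have hN2 : 2 ≤ N := Nat.le_floor (by exact_mod_cast huinv)
    have hNR : (2:ℝ) ≤ (N:ℝ) := by exact_mod_cast hN2
    have hNle : (N:ℝ) ≤ u⁻¹ := Nat.floor_le (by positivity)
    have hNu1 : (N:ℝ) * u ≤ 1 := by
      calc (N:ℝ) * u ≤ u⁻¹ * u := mul_le_mul_of_nonneg_right hNle hu.le
        _ = 1 := inv_mul_cancel₀ hu.ne'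
    have hNgt : u⁻¹ < (N:ℝ) + 1 := Nat.lt_floor_add_one _
    have hNu2 : 1 ≤ 2 * (N:ℝ) * u := by
      have h1 : u⁻¹ ≤ 2 * N := by linarith
      have := mul_le_mul_of_nonneg_right h1 hu.le
      rw [inv_mul_cancel₀ hu.ne'] at this
      linarith
    -- exponential bound on t
    have htexp : Real.exp (-(2*u)) ≤ t := by
      have e1 : 1 + 2*u ≤ Real.exp (2*u) := by
        have := Real.add_one_le_exp (2*u); linarith
      have e2 : (Real.exp (2*u))⁻¹ ≤ (1+2*u)⁻¹ := by
        apply inv_anti₀ (by positivity) e1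
      have e3 : (1+2*u)⁻¹ ≤ t := by
        rw [inv_eq_one_div, div_le_iff₀ (by positivity)]
        rw [hu_def]
        nlinarith [mul_nonneg (by linarith : (0:ℝ) ≤ 2*t-1) (by linarith : (0:ℝ) ≤ 1-t)]
      rw [Real.exp_neg]
      linarith
    -- the derivative sum
    have hD := deriv_hasSum a ha f hf ht0 ht1
    set D : ℝ := (((t:ℂ)) * deriv f (t:ℂ)).re with hD_def
    set g : ℕ → ℝ := fun n => ((n:ℝ)+1) * a (n+1) * t^(n+1) with hg_def
    have hgnn : ∀ n, 0 ≤ g n := by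
      intro n
      rw [hg_def]
      have := ha (n+1)
      positivity
    have hDnn : 0 ≤ D := hD.nonneg hgnn
    -- per-term lower bound on the block
    set E : ℝ := Real.exp (-6) with hE_def
    have hEpos : 0 < E := Real.exp_pos _
    set G : ℝ := c * ((2*u)^s)⁻¹ * (E * E * M) with hG_def
    have h2upos : (0:ℝ) < 2*u := by positivity
    have h2us : (0:ℝ) < (2*u)^s := Real.rpow_pos_of_pos h2upos s
    have hGnn : 0 ≤ G := by rw [hG_def]; positivity
    have hterm : ∀ n ∈ Finset.Icc N (2*N), G ≤ g n := by
      intro n hn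
      rw [Finset.mem_Icc] at hn
      obtain ⟨hn1, hn2⟩ := hn
      set m : ℕ := n + 1 with hm_def
      have hmR : ((m:ℕ):ℝ) = (n:ℝ) + 1 := by rw [hm_def]; push_cast; ring
      have hmpos : (0:ℝ) < (m:ℝ) := by rw [hmR]; positivity
      have hmN : (N:ℝ) ≤ (m:ℝ) := by
        rw [hmR]
        have : (N:ℝ) ≤ (n:ℝ) := by exact_mod_cast hn1
        linarith
      have hm3N : (m:ℝ) ≤ 3 * N := by
        rw [hmR]
        have : (n:ℝ) ≤ 2*(N:ℝ) := by exact_mod_cast hn2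
        linarith
      -- Gamma coefficient bound
      have hA : c * (m:ℝ)^(s-1) ≤ Real.Gamma ((m:ℝ)+s) / (Real.Gamma s * (m.factorial:ℝ)) := by
        rw [le_div_iff₀ (by positivity)]
        calc c * (m:ℝ)^(s-1) * (Real.Gamma s * (m.factorial:ℝ))
            = c * (Real.Gamma s * (m.factorial:ℝ) * (m:ℝ)^(s-1)) := by ring
          _ ≤ Real.Gamma ((m:ℝ)+s) := hcΓ m (by omega)
      have hmom : t^m * M ≤ ∫ x in Ico (0:ℝ) 1, x ^ m ∂μ := hmom_lb m
      have ham : (c * (m:ℝ)^(s-1)) * (t^m * M) ≤ a m := by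
        rw [ha_def]
        apply mul_le_mul hA hmom (by positivity) (by positivity)
      -- t^m lower bound
      have htm : E ≤ t^m := by
        have h1 : Real.exp (-(2*u)) ^ m ≤ t^m := pow_le_pow_left₀ (Real.exp_nonneg _) htexp m
        have h2 : Real.exp ((m:ℝ) * (-(2*u))) = Real.exp (-(2*u)) ^ m :=
          Real.exp_nat_mul _ m
        have h3 : E ≤ Real.exp ((m:ℝ) * (-(2*u))) := by
          rw [hE_def]
          apply Real.exp_le_exp.mpr
          have hmu : (m:ℝ) * u ≤ 3 * ((N:ℝ) * u) := by
            have := mul_le_mul_of_nonneg_right hm3N hu.le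
            linarith
          have : (m:ℝ) * u ≤ 3 := by linarith
          nlinarith
        linarith [h2 ▸ h3]
      -- m^s lower bound
      have hms : ((2*u)^s)⁻¹ ≤ (m:ℝ)^s := by
        have hNr : (2*u)⁻¹ ≤ (N:ℝ) := by
          rw [inv_eq_one_div, div_le_iff₀ h2upos]
          linarith
        have hmr : (2*u)⁻¹ ≤ (m:ℝ) := le_trans hNr hmN
        calc ((2*u)^s)⁻¹ = ((2*u)⁻¹)^s := (Real.inv_rpow h2upos.le s).symm
          _ ≤ (m:ℝ)^s := Real.rpow_le_rpow (by positivity) hmr hs.le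
      have hsplit : (m:ℝ)^s = (m:ℝ) * (m:ℝ)^(s-1) := by
        have h4 := Real.rpow_add hmpos 1 (s-1)
        rw [show (1:ℝ)+(s-1) = s by ring, Real.rpow_one] at h4
        exact h4
      -- assemble
      have step1 : G ≤ c * (m:ℝ)^s * (t^m * t^m * M) := by
        rw [hG_def]
        have hEE : E * E * M ≤ t^m * t^m * M :=
          mul_le_mul_of_nonneg_right (mul_le_mul htm htm hEpos.le (by positivity)) hMnn
        have := mul_le_mul (mul_le_mul_of_nonneg_left hms hc.le) hEE (by positivity)
          (by positivity)
        calc c * ((2*u)^s)⁻¹ * (E*E*M) ≤ c * (m:ℝ)^s * (t^m*t^m*M) := this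
          _ = c * (m:ℝ)^s * (t^m*t^m*M) := rfl
      have step2 : c * (m:ℝ)^s * (t^m * t^m * M) = (m:ℝ) * ((c * (m:ℝ)^(s-1)) * (t^m * M)) * t^m := by
        rw [hsplit]; ring
      have step3 : (m:ℝ) * ((c * (m:ℝ)^(s-1)) * (t^m * M)) * t^m ≤ (m:ℝ) * a m * t^m := by
        apply mul_le_mul_of_nonneg_right _ (by positivity)
        exact mul_le_mul_of_nonneg_left ham hmpos.le
      have hgn : g n = (m:ℝ) * a m * t^m := by
        rw [hg_def, hmR]
      rw [hgn]
      linarith [step1, step2 ▸ step3]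
    -- sum over the block
    have hblock : ∑ n ∈ Finset.Icc N (2*N), g n ≤ D :=
      sum_le_hasSum _ (fun i _ => hgnn i) hD
    have hcard : (Finset.Icc N (2*N)).card = N + 1 := by
      rw [Nat.card_Icc]; omega
    have hsumge : ((N:ℝ)+1) * G ≤ ∑ n ∈ Finset.Icc N (2*N), g n := by
      have := Finset.card_nsmul_le_sum (Finset.Icc N (2*N)) g G hterm
      rw [hcard, nsmul_eq_mul] at this
      push_cast at this
      linarith
    have hDge : (N:ℝ) * G ≤ D := by
      have h5 : (N:ℝ) * G ≤ ((N:ℝ)+1) * G :=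
        mul_le_mul_of_nonneg_right (by linarith) hGnn
      linarith
    -- Bloch bound
    have hBloch_t : (1 - t^2) * ‖deriv f (t:ℂ)‖ ≤ B := by
      have := hB (t:ℂ) (by simp [abs_of_nonneg ht0]; exact ht1)
      rwa [Complex.norm_real, Real.norm_eq_abs, abs_of_nonneg ht0] at this
    have habs : ‖(t:ℂ) * deriv f (t:ℂ)‖ = t * ‖deriv f (t:ℂ)‖ := by
      rw [norm_mul, Complex.norm_real, Real.norm_eq_abs, abs_of_nonneg ht0]
    have hDle : D ≤ ‖deriv f (t:ℂ)‖ := by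
      calc D ≤ ‖(t:ℂ) * deriv f (t:ℂ)‖ := Complex.re_le_norm _
        _ = t * ‖deriv f (t:ℂ)‖ := habs
        _ ≤ 1 * ‖deriv f (t:ℂ)‖ := by
            apply mul_le_mul_of_nonneg_right ht1.le (norm_nonneg _)
        _ = ‖deriv f (t:ℂ)‖ := one_mul _
    have huD : u * D ≤ B := by
      have hu1t : u ≤ 1 - t^2 := by
        rw [hu_def]
        nlinarith [mul_nonneg ht0 (by linarith : (0:ℝ) ≤ 1 - t)]
      calc u * D ≤ u * ‖deriv f (t:ℂ)‖ := mul_le_mul_of_nonneg_left hDle hu.le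
        _ ≤ (1 - t^2) * ‖deriv f (t:ℂ)‖ :=
            mul_le_mul_of_nonneg_right hu1t (norm_nonneg _)
        _ ≤ B := hBloch_t
    -- conclude G ≤ 2B
    have hG2B : G ≤ 2 * B := by
      have h1 : u * ((N:ℝ) * G) ≤ u * D := mul_le_mul_of_nonneg_left hDge hu.le
      have h2 : G ≤ 2 * (u * ((N:ℝ) * G)) := by
        calc G = G * 1 := (mul_one G).symm
          _ ≤ G * (2 * (N:ℝ) * u) := mul_le_mul_of_nonneg_left hNu2 hGnn
          _ = 2 * (u * ((N:ℝ) * G)) := by ring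
      linarith
    -- unravel G
    have hQQ : E * E = Real.exp (-12) := by
      rw [hE_def, ← Real.exp_add]; norm_num
    have hP : (2*u)^s = 2^s * u^s := Real.mul_rpow (by norm_num) hu.le
    have hexp12 : Real.exp (-12) * Real.exp 12 = 1 := by rw [← Real.exp_add]; norm_num
    have h2s1eq : (2:ℝ)^(s+1) = 2 * (2:ℝ)^s := by
      rw [Real.rpow_add two_pos, Real.rpow_one]; ring
    have hG2B' : c * (2^s * u^s)⁻¹ * (Real.exp (-12) * M) ≤ 2 * B := by
      rw [← hP, ← hQQ]; exact hG2B
    have hMid : M = (c * (2^s * u^s)⁻¹ * (Real.exp (-12) * M)) * (2^s * u^s * Real.exp 12 / c) := by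
      field_simp
      linear_combination (-M) * hexp12
    have hfinal : M ≤ 2^(s+1) * Real.exp 12 * B / c * u^s := by
      calc M = (c * (2^s * u^s)⁻¹ * (Real.exp (-12) * M)) * (2^s * u^s * Real.exp 12 / c) := hMid
        _ ≤ (2*B) * (2^s * u^s * Real.exp 12 / c) := by
            apply mul_le_mul_of_nonneg_right hG2B' (by positivity)
        _ = 2^(s+1) * Real.exp 12 * B / c * u^s := by
            rw [h2s1eq]; field_simp
    calc M ≤ 2^(s+1) * Real.exp 12 * B / c * u^s := hfinal
      _ ≤ C * u^s := by
          apply mul_le_mul_of_nonneg_right _ husnn.le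
          rw [hC_def]
          have : 0 ≤ T * 2 ^ s := by positivity
          linarith
end

section
/- Suppose s > 0, t > 0 and μ is a positive Borel measure on the open unit disk 𝔻. If sup_{a∈𝔻} ∫_𝔻 (1-|a|^2)^t / |1-\bar{a}w|^{s+t} dμ(w) < ∞, then μ is an s-Carleson measure on 𝔻, i.e., μ(S(I)) ≤ C|I|^s for every arc I of the unit circle, where S(I) = {rζ : 1-|I| < r < 1, ζ ∈ I} is the Carleson box over I. -/
open MeasureTheory Set Real

/-- The Carleson box over the arc of the unit circle centered at `exp(iθ)` with
normalized arclength `h` (so that the whole circle has length 1). -/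
def carlesonBox (θ h : ℝ) : Set ℂ :=
  {z : ℂ | 1 - h < ‖z‖ ∧ ‖z‖ < 1 ∧
    |Complex.arg (z * Complex.exp (-(θ:ℂ) * Complex.I))| ≤ π * h}

lemma aux_exp_sub_one (φ : ℝ) :
    ‖Complex.exp ((φ:ℂ) * Complex.I) - 1‖ ≤ |φ| := by
  have h1 : Complex.exp ((φ:ℂ) * Complex.I) - 1
      = ((Real.cos φ - 1 : ℝ) : ℂ) + ((Real.sin φ : ℝ) : ℂ) * Complex.I := by
    rw [Complex.exp_mul_I]
    push_cast
    ring
  rw [h1, Complex.norm_add_mul_I]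
  rw [show |φ| = Real.sqrt (φ ^ 2) from (Real.sqrt_sq_eq_abs φ).symm]
  apply Real.sqrt_le_sqrt
  have hc := Real.one_sub_sq_div_two_le_cos (x := φ)
  nlinarith [Real.sin_sq_add_cos_sq φ]

theorem stmt_14 (s t : ℝ) (hs : 0 < s) (ht : 0 < t) (μ : Measure ℂ)
    (M : ℝ)
    (hsup : ∀ a ∈ Metric.ball (0:ℂ) 1,
      (∫⁻ w in Metric.ball (0:ℂ) 1,
        ENNReal.ofReal ((1 - ‖a‖ ^ 2) ^ t /
          ‖1 - (starRingEnd ℂ) a * w‖ ^ (s + t)) ∂μ)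
        ≤ ENNReal.ofReal M) :
    ∃ C : ℝ, 0 < C ∧ ∀ θ h : ℝ, 0 < h → h ≤ 1 →
      μ (carlesonBox θ h) ≤ ENNReal.ofReal (C * h ^ s) := by
  set K : ℝ := (2 + π) ^ (s + t) with hK
  have hπ : (0:ℝ) < 2 + π := by positivity
  have hKpos : 0 < K := Real.rpow_pos_of_pos hπ _
  refine ⟨(max M 0 + 1) * K, by positivity, ?_⟩
  intro θ h hh hh1
  set a : ℂ := ((1 - h : ℝ) : ℂ) * Complex.exp ((θ:ℂ) * Complex.I) with ha
  have h1h : (0:ℝ) ≤ 1 - h := by linarith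
  have habs_a : ‖a‖ = 1 - h := by
    rw [ha, norm_mul, Complex.norm_real, Real.norm_eq_abs, Complex.norm_exp_ofReal_mul_I, mul_one,
      abs_of_nonneg h1h]
  have haball : a ∈ Metric.ball (0:ℂ) 1 := by
    simp only [Metric.mem_ball, Complex.dist_eq, sub_zero, habs_a]
    linarith
  have hconj : (starRingEnd ℂ) a = ((1 - h : ℝ) : ℂ) * Complex.exp (-(θ:ℂ) * Complex.I) := by
    rw [ha, map_mul, Complex.conj_ofReal, ← Complex.exp_conj]
    congr 1
    simp [Complex.conj_I]
  -- numerator bound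
  have hnum : h ≤ 1 - ‖a‖ ^ 2 := by
    rw [habs_a]; nlinarith
  -- measurability of the box
  have hmeas : MeasurableSet (carlesonBox θ h) := by
    have m1 : Measurable fun z : ℂ => ‖z‖ := continuous_norm.measurable
    have m2 : Measurable fun z : ℂ =>
        |Complex.arg (z * Complex.exp (-(θ:ℂ) * Complex.I))| :=
      (Complex.measurable_arg.comp (measurable_id.mul_const _)).abs
    exact (measurableSet_lt measurable_const m1).inter
      ((measurableSet_lt m1 measurable_const).inter (measurableSet_le m2 measurable_const))
  have hsub : carlesonBox θ h ⊆ Metric.ball (0:ℂ) 1 := by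
    intro w hw
    simp only [Metric.mem_ball, Complex.dist_eq, sub_zero]
    exact hw.2.1
  -- pointwise bound on the box
  have hpt : ∀ w ∈ carlesonBox θ h,
      ENNReal.ofReal (1 / (K * h ^ s)) ≤
        ENNReal.ofReal ((1 - ‖a‖ ^ 2) ^ t /
          (‖1 - (starRingEnd ℂ) a * w‖) ^ (s + t)) := by
    intro w hw
    obtain ⟨hw1, hw2, hw3⟩ := hw
    set u : ℂ := w * Complex.exp (-(θ:ℂ) * Complex.I) with hu
    have habs_u : ‖u‖ = ‖w‖ := by
      rw [hu, norm_mul]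
      rw [show -(θ:ℂ) * Complex.I = ((-θ : ℝ):ℂ) * Complex.I by push_cast; ring,
        Complex.norm_exp_ofReal_mul_I, mul_one]
    have hcw : (starRingEnd ℂ) a * w = ((1 - h : ℝ):ℂ) * u := by
      rw [hconj, hu]; ring
    -- |1 - conj a * w| ≤ (2+π) h
    have hden_le : ‖1 - (starRingEnd ℂ) a * w‖ ≤ (2 + π) * h := by
      rw [hcw]
      set r : ℝ := ‖u‖ with hr
      set φ : ℝ := Complex.arg u with hφ
      have hur : ((r:ℝ):ℂ) * Complex.exp ((φ:ℂ) * Complex.I) = u :=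
        Complex.norm_mul_exp_arg_mul_I u
      have hdecomp : 1 - ((1 - h : ℝ):ℂ) * u
          = (1 - Complex.exp ((φ:ℂ) * Complex.I))
            + ((1 - (1 - h) * r : ℝ):ℂ) * Complex.exp ((φ:ℂ) * Complex.I) := by
        rw [← hur]; push_cast; ring
      rw [hdecomp]
      have h2 : ‖1 - Complex.exp ((φ:ℂ) * Complex.I)‖ ≤ |φ| := by
        rw [← norm_neg]
        simpa [neg_sub] using aux_exp_sub_one φ
      have h3 : ‖((1 - (1 - h) * r : ℝ):ℂ)
            * Complex.exp ((φ:ℂ) * Complex.I)‖ = |1 - (1 - h) * r| := by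
        rw [norm_mul, Complex.norm_real, Real.norm_eq_abs, Complex.norm_exp_ofReal_mul_I, mul_one]
      have hr1 : r < 1 := by rw [habs_u]; exact hw2
      have hr2 : 1 - h < r := by rw [habs_u]; exact hw1
      have h4 : |1 - (1 - h) * r| ≤ 2 * h := by
        rw [abs_of_nonneg (by nlinarith)]
        nlinarith
      have h5 : |φ| ≤ π * h := hw3
      calc ‖_‖ ≤ ‖1 - Complex.exp ((φ:ℂ) * Complex.I)‖
            + ‖((1 - (1 - h) * r : ℝ):ℂ) * Complex.exp ((φ:ℂ) * Complex.I)‖ :=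
            norm_add_le _ _
        _ ≤ |φ| + |1 - (1 - h) * r| := by rw [h3]; linarith
        _ ≤ π * h + 2 * h := by linarith
        _ = (2 + π) * h := by ring
    -- |1 - conj a * w| > 0
    have hden_pos : 0 < ‖1 - (starRingEnd ℂ) a * w‖ := by
      have habs_lt : ‖(starRingEnd ℂ) a * w‖ < 1 := by
        rw [norm_mul, Complex.norm_conj, habs_a]
        calc (1 - h) * ‖w‖ ≤ 1 * ‖w‖ :=
              mul_le_mul_of_nonneg_right (by linarith) (norm_nonneg w)
          _ < 1 := by rw [one_mul]; exact hw2
      have : 1 - (starRingEnd ℂ) a * w ≠ 0 := by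
        intro h0
        have : (starRingEnd ℂ) a * w = 1 := by linear_combination -h0
        rw [this] at habs_lt; simp at habs_lt
      exact norm_pos_iff.mpr this
    apply ENNReal.ofReal_le_ofReal
    have key : h ^ t / ((2 + π) * h) ^ (s + t)
        ≤ (1 - ‖a‖ ^ 2) ^ t /
          (‖1 - (starRingEnd ℂ) a * w‖) ^ (s + t) := by
      apply div_le_div₀ (Real.rpow_nonneg (by nlinarith) t)
        (Real.rpow_le_rpow hh.le hnum ht.le)
        (Real.rpow_pos_of_pos hden_pos _)
        (Real.rpow_le_rpow (norm_nonneg _) hden_le (by linarith))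
    refine le_trans (le_of_eq ?_) key
    rw [Real.mul_rpow hπ.le hh.le, Real.rpow_add hh, ← hK]
    have hhs : (0:ℝ) < h ^ s := Real.rpow_pos_of_pos hh _
    have hht : (0:ℝ) < h ^ t := Real.rpow_pos_of_pos hh _
    field_simp
  -- put it together
  have step1 : μ (carlesonBox θ h) * ENNReal.ofReal (1 / (K * h ^ s))
      ≤ ENNReal.ofReal M := by
    calc μ (carlesonBox θ h) * ENNReal.ofReal (1 / (K * h ^ s))
        = ∫⁻ _ in carlesonBox θ h, ENNReal.ofReal (1 / (K * h ^ s)) ∂μ := by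
          rw [setLIntegral_const]; ring
      _ ≤ ∫⁻ w in carlesonBox θ h,
            ENNReal.ofReal ((1 - ‖a‖ ^ 2) ^ t /
              (‖1 - (starRingEnd ℂ) a * w‖) ^ (s + t)) ∂μ :=
          setLIntegral_mono' hmeas hpt
      _ ≤ ∫⁻ w in Metric.ball (0:ℂ) 1,
            ENNReal.ofReal ((1 - ‖a‖ ^ 2) ^ t /
              (‖1 - (starRingEnd ℂ) a * w‖) ^ (s + t)) ∂μ :=
          lintegral_mono_set hsub
      _ ≤ ENNReal.ofReal M := hsup a haball
  have hhs : (0:ℝ) < h ^ s := Real.rpow_pos_of_pos hh _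
  have hc0 : ENNReal.ofReal (1 / (K * h ^ s)) ≠ 0 := by
    simp only [ne_eq, ENNReal.ofReal_eq_zero, not_le]
    positivity
  have step2 : μ (carlesonBox θ h) ≤ ENNReal.ofReal (max M 0 * (K * h ^ s)) := by
    rw [← ENNReal.mul_le_mul_iff_left hc0 ENNReal.ofReal_ne_top]
    calc μ (carlesonBox θ h) * ENNReal.ofReal (1 / (K * h ^ s))
        ≤ ENNReal.ofReal M := step1
      _ ≤ ENNReal.ofReal (max M 0 * (K * h ^ s)) * ENNReal.ofReal (1 / (K * h ^ s)) := by
          rw [← ENNReal.ofReal_mul (by positivity)]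
          apply ENNReal.ofReal_le_ofReal
          rw [mul_assoc, mul_one_div, div_self (by positivity), mul_one]
          exact le_max_left M 0
  refine step2.trans (ENNReal.ofReal_le_ofReal ?_)
  have : max M 0 * (K * h ^ s) ≤ ((max M 0 + 1) * K) * h ^ s := by
    have h1 : max M 0 * K ≤ (max M 0 + 1) * K := by nlinarith [le_max_right M 0]
    nlinarith [le_max_right M 0]
  linarith
end
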